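/- arXiv:1707.09748 — 2 statements merged into one kernel-verified Lean document; each statement's English description precedes it below -/
import Mathlib

section
/- The zeros of φ_n^α all lie in 𝔻 and the zeros of φ_n^{α*} all lie in 𝔼; the zeros of φ_n^β all lie in 𝔼 and the zeros of φ_n^{β*} all lie in 𝔻. Moreover, if γ_n = α_n then the zeros of φ_n coincide with the zeros of φ_n^α and hence all lie in 𝔻, while if γ_n = β_n the zeros of φ_n coincide with the zeros of φ_n^β and hence all lie in 𝔼. -/
noncomputable section
open MeasureTheory
open scoped Classical

namespace ORF

/-- complex conjugation -/
def conj' (z : ℂ) : ℂ := (starRingEnd ℂ) z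

/-- membership in the unit circle 𝕋 -/
def onT (z : ℂ) : Prop := ‖z‖ = 1

/-- `z` is a (strictly) positive real number -/
def posR (z : ℂ) : Prop := 0 < z.re ∧ z.im = 0

/-- σ_j = conj(α_j)/|α_j| (σ_j = 1 if α_j = 0, i.e. if β_j = ∞) -/
def sig (α : ℕ → ℂ) (j : ℕ) : ℂ :=
  if α j = 0 then 1 else conj' (α j) / (‖α j‖ : ℂ)

/-- ς_n = ∏_{j=1}^n σ_j -/
def sigProd (α : ℕ → ℂ) (n : ℕ) : ℂ := ∏ j ∈ Finset.Icc 1 n, sig α j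

/-- ϖ_j^α(z) = 1 − conj(α_j)·z, as a polynomial in z -/
def wA (α : ℕ → ℂ) (j : ℕ) : Polynomial ℂ :=
  1 - Polynomial.C (conj' (α j)) * Polynomial.X

/-- ϖ_j^β(z) = 1 − conj(β_j)·z = 1 − z/α_j, and −z when β_j = ∞ (α_j = 0) -/
def wB (α : ℕ → ℂ) (j : ℕ) : Polynomial ℂ :=
  if α j = 0 then -Polynomial.X else 1 - Polynomial.C (α j)⁻¹ * Polynomial.X

/-- ϖ_j = ϖ_j^γ (γ_j = α_j when `c j`, γ_j = β_j otherwise) -/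
def wG (α : ℕ → ℂ) (c : ℕ → Bool) (j : ℕ) : Polynomial ℂ :=
  if c j then wA α j else wB α j

/-- π_n^α -/
def piA (α : ℕ → ℂ) (n : ℕ) : Polynomial ℂ := ∏ j ∈ Finset.Icc 1 n, wA α j
/-- π_n^β -/
def piB (α : ℕ → ℂ) (n : ℕ) : Polynomial ℂ := ∏ j ∈ Finset.Icc 1 n, wB α j
/-- π_n = π_n^γ -/
def piG (α : ℕ → ℂ) (c : ℕ → Bool) (n : ℕ) : Polynomial ℂ := ∏ j ∈ Finset.Icc 1 n, wG α c j

/-- 𝕒_n = {1 ≤ j ≤ n : γ_j = α_j} -/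
def aSet (c : ℕ → Bool) (n : ℕ) : Finset ℕ := (Finset.Icc 1 n).filter (fun j => c j = true)
/-- 𝕓_n = {1 ≤ j ≤ n : γ_j = β_j} -/
def bSet (c : ℕ → Bool) (n : ℕ) : Finset ℕ := (Finset.Icc 1 n).filter (fun j => c j = false)

/-- Blaschke factor ζ_j^α -/
def zetaA (α : ℕ → ℂ) (j : ℕ) (z : ℂ) : ℂ :=
  if α j = 0 then z else sig α j * (z - α j) / (1 - conj' (α j) * z)

/-- Blaschke factor ζ_j^β (β_j = 1/conj(α_j); ζ_j^β(z) = 1/z when β_j = ∞) -/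
def zetaB (α : ℕ → ℂ) (j : ℕ) (z : ℂ) : ℂ :=
  if α j = 0 then z⁻¹ else sig α j * (z - (conj' (α j))⁻¹) / (1 - z / α j)

/-- ζ_j = ζ_j^γ -/
def zetaG (α : ℕ → ℂ) (c : ℕ → Bool) (j : ℕ) (z : ℂ) : ℂ :=
  if c j then zetaA α j z else zetaB α j z

/-- B_n^α -/
def BA (α : ℕ → ℂ) (n : ℕ) (z : ℂ) : ℂ := ∏ j ∈ Finset.Icc 1 n, zetaA α j z
/-- B_n^β -/
def BB (α : ℕ → ℂ) (n : ℕ) (z : ℂ) : ℂ := ∏ j ∈ Finset.Icc 1 n, zetaB α j z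
/-- B̌_n^α = ∏_{j ∈ 𝕒_n} ζ_j -/
def BcA (α : ℕ → ℂ) (c : ℕ → Bool) (n : ℕ) (z : ℂ) : ℂ := ∏ j ∈ aSet c n, zetaG α c j z
/-- B̌_n^β = ∏_{j ∈ 𝕓_n} ζ_j -/
def BcB (α : ℕ → ℂ) (c : ℕ → Bool) (n : ℕ) (z : ℂ) : ℂ := ∏ j ∈ bSet c n, zetaG α c j z

/-- ζ̌_n^α (= ζ_n if γ_n = α_n, = 1 otherwise) -/
def zcA (α : ℕ → ℂ) (c : ℕ → Bool) (n : ℕ) (z : ℂ) : ℂ :=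
  if c n then zetaG α c n z else 1
/-- ζ̌_n^β (= ζ_n if γ_n = β_n, = 1 otherwise) -/
def zcB (α : ℕ → ℂ) (c : ℕ → Bool) (n : ℕ) (z : ℂ) : ℂ :=
  if c n then 1 else zetaG α c n z

/-- The space L_n^ν = {p/π_n^ν : deg p ≤ n}; a function `f` belongs to it if it agrees
with such a rational function on the unit circle (where all these objects live). -/
def Lsp (pip : ℕ → Polynomial ℂ) (n : ℕ) : Set (ℂ → ℂ) :=
  {f | ∃ p : Polynomial ℂ, p.natDegree ≤ n ∧ ∀ z, onT z → f z = p.eval z / (pip n).eval z}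

/-- L_{n*}^ν = {f_* : f ∈ L_n^ν} (again as functions on the unit circle, where
f_*(z) = conj(f(1/conj z)) = conj(f(z))) -/
def LstarSp (pip : ℕ → Polynomial ℂ) (n : ℕ) : Set (ℂ → ℂ) :=
  {f | ∃ p : Polynomial ℂ, p.natDegree ≤ n ∧ ∀ z, onT z → f z = conj' (p.eval z / (pip n).eval z)}

/-- R_n^ν = L_n^ν · L_{n*}^ν -/
def Rset (pip : ℕ → Polynomial ℂ) (n : ℕ) : Set (ℂ → ℂ) :=
  {h | ∃ g ∈ Lsp pip n, ∃ k ∈ LstarSp pip n, ∀ z, onT z → h z = g z * k z}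

/-- the substar conjugate f_*(z) = conj(f(1/conj z)) -/
def substar (f : ℂ → ℂ) : ℂ → ℂ := fun z => conj' (f ((conj' z)⁻¹))

/-- superstar conjugate q^*(z) = z^n conj(q(1/conj z)) of a polynomial of degree ≤ n -/
def pstar (n : ℕ) (q : Polynomial ℂ) : Polynomial ℂ :=
  ∑ k ∈ Finset.range (n + 1), Polynomial.C (conj' (q.coeff k)) * Polynomial.X ^ (n - k)

/-- the inner product ⟨f,g⟩ = ∫ conj(f) g dμ -/
def inn (μ : Measure ℂ) (f g : ℂ → ℂ) : ℂ := ∫ z, conj' (f z) * g z ∂μ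

/-- the reciprocal ORF φ_n^{ν*} = B_n^ν (φ_n^ν)_* (resp. φ_n^* = B̌_n^α B̌_n^β (φ_n)_*),
written out as the rational function ς_n p_n^{ν*}/π_n^ν -/
def starF (α : ℕ → ℂ) (pip : ℕ → Polynomial ℂ) (p : ℕ → Polynomial ℂ) (n : ℕ) (z : ℂ) : ℂ :=
  sigProd α n * (pstar n (p n)).eval z / (pip n).eval z

/-- `μ` is a probability measure on the unit circle 𝕋, positive a.e. on 𝕋 -/
structure CircleMeasure (μ : Measure ℂ) : Prop where
  prob : IsProbabilityMeasure μ
  circ : μ {z | ¬ onT z} = 0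
  pos : ∀ U : Set ℂ, IsOpen U → (U ∩ {z | onT z}).Nonempty → 0 < μ U

/-- `φ` (with numerators `p`) is the sequence of orthonormal rational functions for the
nested spaces `Lsp pip`: φ_0 = 1, φ_n = p_n/π_n ∈ L_n \ L_{n-1}, φ_n ⊥ L_{n-1}, ‖φ_n‖ = 1. -/
structure IsORF (μ : Measure ℂ) (pip : ℕ → Polynomial ℂ) (φ : ℕ → ℂ → ℂ)
    (p : ℕ → Polynomial ℂ) : Prop where
  rep : ∀ n z, φ n z = (p n).eval z / (pip n).eval z
  deg : ∀ n, (p n).natDegree ≤ n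
  p0 : p 0 = 1
  notmem : ∀ n, 1 ≤ n → φ n ∉ Lsp pip (n - 1)
  orth : ∀ n, 1 ≤ n → ∀ f ∈ Lsp pip (n - 1), inn μ (φ n) f = 0
  norm : ∀ n, inn μ (φ n) (φ n) = 1

/-- normalization φ_n^{α*}(α_n) > 0 -/
def normA (α : ℕ → ℂ) (p : ℕ → Polynomial ℂ) (n : ℕ) : Prop :=
  posR (sigProd α n * (pstar n (p n)).eval (α n) / (piA α n).eval (α n))

/-- normalization φ_n^{β*}(β_n) > 0 (when β_n = ∞ the value is the limit,
i.e. the ratio of the coefficients of z^n) -/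
def normB (α : ℕ → ℂ) (p : ℕ → Polynomial ℂ) (n : ℕ) : Prop :=
  if α n = 0 then posR (sigProd α n * (pstar n (p n)).coeff n / (piB α n).coeff n)
  else posR (sigProd α n * (pstar n (p n)).eval ((conj' (α n))⁻¹) /
    (piB α n).eval ((conj' (α n))⁻¹))

/-- π̌_n^α = ∏_{j∈𝕒_n} ϖ_j -/
def pidA (α : ℕ → ℂ) (c : ℕ → Bool) (n : ℕ) : Polynomial ℂ := ∏ j ∈ aSet c n, wA α j
/-- π̌_n^β = ∏_{j∈𝕓_n} ϖ_j -/
def pidB (α : ℕ → ℂ) (c : ℕ → Bool) (n : ℕ) : Polynomial ℂ := ∏ j ∈ bSet c n, wB α j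
/-- ∏_{j∈𝕓_n}(z − β_j), a factor being −1 when β_j = ∞ -/
def dB (α : ℕ → ℂ) (c : ℕ → Bool) (n : ℕ) : Polynomial ℂ :=
  ∏ j ∈ bSet c n,
    (if α j = 0 then (-1 : Polynomial ℂ) else Polynomial.X - Polynomial.C ((conj' (α j))⁻¹))
/-- ∏_{j∈𝕒_n}(z − α_j) -/
def dA (α : ℕ → ℂ) (c : ℕ → Bool) (n : ℕ) : Polynomial ℂ :=
  ∏ j ∈ aSet c n, (Polynomial.X - Polynomial.C (α j))

/-- ς̌_n^α = ∏_{j∈𝕒_n} σ_j -/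
def sigcA (α : ℕ → ℂ) (c : ℕ → Bool) (n : ℕ) : ℂ := ∏ j ∈ aSet c n, sig α j
/-- ς̌_n^β = ∏_{j∈𝕓_n} σ_j -/
def sigcB (α : ℕ → ℂ) (c : ℕ → Bool) (n : ℕ) : ℂ := ∏ j ∈ bSet c n, sig α j

/-- normalization for the γ-sequence: (φ_n^*/B̌_n^β)(α_n) > 0 when γ_n = α_n and
(φ_n^*/B̌_n^α)(β_n) > 0 when γ_n = β_n, written via the identities
φ_n^*/B̌_n^β = ς̌_n^α p_n^*/(π̌_n^α ∏_{j∈𝕓_n}(z−β_j)) and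
φ_n^*/B̌_n^α = ς̌_n^β p_n^*/(π̌_n^β ∏_{j∈𝕒_n}(z−α_j)) (the value at β_n = ∞ being the
limit, i.e. the ratio of the coefficients of z^n). -/
def normG (α : ℕ → ℂ) (c : ℕ → Bool) (p : ℕ → Polynomial ℂ) (n : ℕ) : Prop :=
  if c n then
    posR (sigcA α c n * (pstar n (p n)).eval (α n) /
      ((pidA α c n).eval (α n) * (dB α c n).eval (α n)))
  else if α n = 0 then
    posR (sigcB α c n * (pstar n (p n)).coeff n / ((pidB α c n) * dA α c n).coeff n)
  else
    posR (sigcB α c n * (pstar n (p n)).eval ((conj' (α n))⁻¹) /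
      ((pidB α c n) * dA α c n).eval ((conj' (α n))⁻¹))

/-- the reproducing kernel k_n(z,w) = Σ_{k=0}^n φ_k(z) conj(φ_k(w)) -/
def ker (φ : ℕ → ℂ → ℂ) (n : ℕ) (z w : ℂ) : ℂ :=
  ∑ k ∈ Finset.range (n + 1), φ k z * conj' (φ k w)

/-- evaluation of a polynomial of degree ≤ m at γ_j (its coefficient of z^m when γ_j = ∞) -/
def gEval (α : ℕ → ℂ) (c : ℕ → Bool) (m j : ℕ) (q : Polynomial ℂ) : ℂ :=
  if c j then q.eval (α j)
  else if α j = 0 then q.coeff m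
  else q.eval ((conj' (α j))⁻¹)

/-- evaluation of a polynomial of degree ≤ m at β_j (its coefficient of z^m when β_j = ∞) -/
def bEval (α : ℕ → ℂ) (m j : ℕ) (q : Polynomial ℂ) : ℂ :=
  if α j = 0 then q.coeff m else q.eval ((conj' (α j))⁻¹)

/-- η_n^α (the unimodular constant in the Szegő parameter λ_n^α) -/
def etaA (α : ℕ → ℂ) (p : ℕ → Polynomial ℂ) (n : ℕ) : ℂ :=
  conj' (sigProd α (n - 2)) * conj' ((pstar (n - 1) (p (n - 1))).eval (α (n - 1))) /
    ((pstar (n - 1) (p (n - 1))).eval (α (n - 1)))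

/-- the Szegő parameter λ_n^α -/
def lamA (α : ℕ → ℂ) (p : ℕ → Polynomial ℂ) (n : ℕ) : ℂ :=
  etaA α p n * (p n).eval (α (n - 1)) / conj' ((pstar n (p n)).eval (α (n - 1)))

/-- η_n^β -/
def etaB (α : ℕ → ℂ) (p : ℕ → Polynomial ℂ) (n : ℕ) : ℂ :=
  conj' (sigProd α (n - 2)) * conj' (bEval α (n - 1) (n - 1) (pstar (n - 1) (p (n - 1)))) /
    (bEval α (n - 1) (n - 1) (pstar (n - 1) (p (n - 1))))

/-- the Szegő parameter λ_n^β -/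
def lamB (α : ℕ → ℂ) (p : ℕ → Polynomial ℂ) (n : ℕ) : ℂ :=
  etaB α p n * bEval α n (n - 1) (p n) / conj' (bEval α n (n - 1) (pstar n (p n)))

/-- η_n = η_n^γ -/
def etaG (α : ℕ → ℂ) (c : ℕ → Bool) (p : ℕ → Polynomial ℂ) (n : ℕ) : ℂ :=
  conj' (sigProd α (n - 2)) * conj' (gEval α c (n - 1) (n - 1) (pstar (n - 1) (p (n - 1)))) /
    (gEval α c (n - 1) (n - 1) (pstar (n - 1) (p (n - 1))))

/-- the Szegő parameter λ_n = λ_n^γ -/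
def lamG (α : ℕ → ℂ) (c : ℕ → Bool) (p : ℕ → Polynomial ℂ) (n : ℕ) : ℂ :=
  etaG α c p n * gEval α c n (n - 1) (p n) / conj' (gEval α c n (n - 1) (pstar n (p n)))

/-- functions of the second kind: ψ(z) = ∫ E(t,z) φ(t) − D(t,z) φ(z) dμ(t) -/
def psi (μ : Measure ℂ) (φ : ℂ → ℂ) (z : ℂ) : ℂ :=
  ∫ t, (2 * t / (t - z)) * φ t - ((t + z) / (t - z)) * φ z ∂μ

/-- ∏_{j=k+1}^n ϖ_j -/
def tailProd (α : ℕ → ℂ) (c : ℕ → Bool) (n k : ℕ) : Polynomial ℂ :=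
  ∏ j ∈ Finset.Icc (k + 1) n, wG α c j

/-- the numerator C_n(z,w) of the kernel k_n = C_n/(π_n(z) conj(π_n(w))), as a polynomial
in w after conjugation: C_n(z,w) = conj((CnPoly n z).eval w) -/
def CnPoly (α : ℕ → ℂ) (c : ℕ → Bool) (p : ℕ → Polynomial ℂ) (n : ℕ) (z : ℂ) : Polynomial ℂ :=
  ∑ k ∈ Finset.range (n + 1),
    Polynomial.C (conj' ((p k).eval z * (tailProd α c n k).eval z)) * ((p k) * tailProd α c n k)

/-- z ↦ C_n(z,∞) (the coefficient of w^n of w ↦ C_n(z,w)), as a polynomial in z -/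
def CnInf (α : ℕ → ℂ) (c : ℕ → Bool) (p : ℕ → Polynomial ℂ) (n : ℕ) : Polynomial ℂ :=
  ∑ k ∈ Finset.range (n + 1),
    ((p k) * tailProd α c n k) * Polynomial.C (conj' (((p k) * tailProd α c n k).coeff n))

/-- ϖ_n^*(z) = z − γ_n (= −1 when γ_n = ∞) -/
def wstarG (α : ℕ → ℂ) (c : ℕ → Bool) (n : ℕ) : Polynomial ℂ :=
  if c n then Polynomial.X - Polynomial.C (α n)
  else if α n = 0 then -1
  else Polynomial.X - Polynomial.C ((conj' (α n))⁻¹)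

/-! ### Auxiliary infrastructure -/

section Aux

open Polynomial MeasureTheory

lemma onT_ne_zero {z : ℂ} (h : onT z) : z ≠ 0 := by
  intro h0; rw [h0] at h; simp [onT] at h

lemma onT_mul_conj {z : ℂ} (h : onT z) : z * conj' z = 1 := by
  have := Complex.mul_conj z
  rw [conj', this, Complex.normSq_eq_norm_sq, h]; norm_num

lemma onT_sphere : {z : ℂ | onT z} = Metric.sphere (0:ℂ) 1 := by
  ext z; simp [onT, Metric.mem_sphere, Complex.dist_eq]

lemma continuous_conj' : Continuous conj' := Complex.continuous_conj

lemma measurable_conj' : Measurable conj' := continuous_conj'.measurable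

lemma ae_onT {μ : Measure ℂ} (hμ : CircleMeasure μ) : ∀ᵐ z ∂μ, onT z := by
  rw [MeasureTheory.ae_iff]; exact hμ.circ

/-- the unit circle is infinite -/
lemma onT_infinite : {z : ℂ | onT z}.Infinite := by
  apply Set.infinite_of_injective_forall_mem
    (f := fun n : ℕ => Complex.exp ((1/(n+1) : ℝ) * Complex.I)) ?_ ?_
  · intro a b hab
    rw [Complex.exp_eq_exp_iff_exists_int] at hab
    obtain ⟨k, hk⟩ := hab
    have hC : ((1/(a+1):ℝ):ℂ) = ((1/(b+1):ℝ):ℂ) + (k:ℂ) * (2*((Real.pi:ℝ):ℂ)) := by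
      apply mul_right_cancel₀ Complex.I_ne_zero
      rw [add_mul, hk]; ring
    have h2 : (1/(a+1) : ℝ) = 1/(b+1) + (k:ℝ)*(2*Real.pi) := by exact_mod_cast hC
    have hpi : (2:ℝ) < 2 * Real.pi := by nlinarith [Real.pi_gt_three]
    have ha0 : (0:ℝ) < 1/(a+1) := by positivity
    have hb0 : (0:ℝ) < 1/(b+1) := by positivity
    have ha1 : (1/(a+1):ℝ) ≤ 1 := by
      rw [div_le_one (by positivity)]; push_cast; linarith
    have hb1 : (1/(b+1):ℝ) ≤ 1 := by
      rw [div_le_one (by positivity)]; push_cast; linarith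
    have hk0 : k = 0 := by
      by_contra hne
      rcases lt_or_gt_of_ne hne with h|h
      · have hk1 : (k:ℝ) ≤ -1 := by exact_mod_cast (by omega : k ≤ -1)
        nlinarith
      · have hk1 : (1:ℝ) ≤ (k:ℝ) := by exact_mod_cast h
        nlinarith
    have hab' : (1/(a+1):ℝ) = 1/(b+1) := by rw [hk0] at h2; push_cast at h2; linarith
    have ha : ((a:ℝ)+1) ≠ 0 := by positivity
    have hb : ((b:ℝ)+1) ≠ 0 := by positivity
    field_simp at hab'
    first
    | exact hab'.symm
    | exact hab'
    | (have hba : (a:ℝ) = b := by linarith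
       exact_mod_cast hba)
  · intro n
    simp only [Set.mem_setOf_eq, onT]
    exact Complex.norm_exp_ofReal_mul_I _

/-- μ cannot be concentrated on a finite set -/
lemma not_null_compl_finite {μ : Measure ℂ} (hμ : CircleMeasure μ) {S : Set ℂ}
    (hS : S.Finite) (h : μ Sᶜ = 0) : False := by
  obtain ⟨t, htT, htS⟩ : ∃ t, onT t ∧ t ∉ S := by
    have := (onT_infinite.diff hS).nonempty
    obtain ⟨t, ht⟩ := this
    exact ⟨t, ht.1, ht.2⟩
  have hop : IsOpen Sᶜ := hS.isClosed.isOpen_compl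
  obtain ⟨r, hr0, hball⟩ := Metric.isOpen_iff.mp hop t htS
  have hpos := hμ.pos (Metric.ball t r) Metric.isOpen_ball
    ⟨t, Metric.mem_ball_self hr0, htT⟩
  have : μ (Metric.ball t r) ≤ μ Sᶜ := measure_mono hball
  rw [h] at this
  exact absurd (le_antisymm this zero_le) (by exact ne_of_gt hpos)

lemma integrable_of_onT_bound {E : Type*} [NormedAddCommGroup E] {μ : Measure ℂ}
    (hμ : CircleMeasure μ) {f : ℂ → E} (hm : AEStronglyMeasurable f μ) {M : ℝ}
    (hb : ∀ z, onT z → ‖f z‖ ≤ M) : Integrable f μ := by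
  haveI := hμ.prob
  refine Integrable.mono' (integrable_const M) hm ?_
  filter_upwards [ae_onT hμ] with z hz using hb z hz

lemma exists_onT_bound {E : Type*} [NormedAddCommGroup E] {f : ℂ → E}
    (hf : ContinuousOn f {z | onT z}) : ∃ M : ℝ, ∀ z, onT z → ‖f z‖ ≤ M := by
  rw [onT_sphere] at hf
  obtain ⟨M, hM⟩ := (isCompact_sphere (0:ℂ) 1).exists_bound_of_continuousOn hf
  exact ⟨M, fun z hz => hM z (by rwa [← onT_sphere, Set.mem_setOf_eq])⟩

lemma integrable_of_cm {E : Type*} [NormedAddCommGroup E] {μ : Measure ℂ}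
    (hμ : CircleMeasure μ) {f : ℂ → E} (hm : AEStronglyMeasurable f μ)
    (hf : ContinuousOn f {z | onT z}) : Integrable f μ := by
  obtain ⟨M, hM⟩ := exists_onT_bound hf
  exact integrable_of_onT_bound hμ hm hM

/-- positivity of integrals of a.e.-on-𝕋 nonneg functions vanishing only finitely often -/
lemma integral_pos_onT {μ : Measure ℂ} (hμ : CircleMeasure μ) {d : ℂ → ℝ}
    (hi : Integrable d μ) (h0 : ∀ z, onT z → 0 ≤ d z)
    (hfin : {z | onT z ∧ d z = 0}.Finite) : 0 < ∫ z, d z ∂μ := by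
  have hae : ∀ᵐ z ∂μ, onT z := ae_onT hμ
  have hnn : 0 ≤ᵐ[μ] d := hae.mono (fun z hz => h0 z hz)
  rcases (integral_nonneg_of_ae hnn).lt_or_eq with h|h
  · exact h
  · exfalso
    have hz : d =ᵐ[μ] 0 := (integral_eq_zero_iff_of_nonneg_ae hnn hi).mp h.symm
    have hS : ∀ᵐ z ∂μ, z ∈ {z | onT z ∧ d z = 0} := by
      filter_upwards [hae, hz] with z h1 h2 using ⟨h1, h2⟩
    rw [MeasureTheory.ae_iff] at hS
    exact not_null_compl_finite hμ hfin (by simpa only [Set.compl_def, Set.mem_setOf_eq] using hS)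

end Aux

section Moments

open Polynomial MeasureTheory

lemma conj'_mul_self (x : ℂ) : conj' x * x = ((Complex.normSq x : ℝ) : ℂ) := by
  rw [Complex.normSq_eq_conj_mul_self]; rfl

lemma conj'_ofReal (r : ℝ) : conj' ((r : ℝ) : ℂ) = ((r : ℝ) : ℂ) := Complex.conj_ofReal r

lemma abs_conj' (z : ℂ) : ‖conj' z‖ = ‖z‖ := Complex.norm_conj z

/-- facts about the moments of the positive measure `W dμ` -/
structure MomFacts (μ : MeasureTheory.Measure ℂ) (W : ℂ → ℝ) (m0 : ℝ) (m1 : ℂ) : Prop where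
  iW : Integrable W μ
  i0 : Integrable (fun z => ((W z : ℝ) : ℂ)) μ
  i1 : Integrable (fun z => z * (W z : ℂ)) μ
  i2 : Integrable (fun z => conj' z * (W z : ℂ)) μ
  hm0 : ∫ z, ((W z : ℝ) : ℂ) ∂μ = ((m0 : ℝ) : ℂ)
  hm1 : ∫ z, z * ((W z : ℝ) : ℂ) ∂μ = m1
  hm1c : ∫ z, conj' z * ((W z : ℝ) : ℂ) ∂μ = conj' m1
  pos : 0 < m0
  lt : ‖m1‖ < m0

lemma unimodular_re_eq_one {w : ℂ} (h1 : ‖w‖ = 1) (h2 : w.re = 1) : w = 1 := by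
  have h3 : Complex.normSq w = 1 := by rw [← Complex.sq_norm, h1]; norm_num
  rw [Complex.normSq_apply, h2] at h3
  have : w.im = 0 := by nlinarith
  exact Complex.ext (by simp [h2]) (by simp [this])

lemma moments {μ : MeasureTheory.Measure ℂ} (hμ : CircleMeasure μ) (u E : Polynomial ℂ)
    (hu : u ≠ 0) (hE : ∀ z, onT z → E.eval z ≠ 0) :
    MomFacts μ (fun z => Complex.normSq (u.eval z / E.eval z))
      (∫ z, Complex.normSq (u.eval z / E.eval z) ∂μ)
      (∫ z, z * ((Complex.normSq (u.eval z / E.eval z) : ℝ) : ℂ) ∂μ) := by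
  set W : ℂ → ℝ := fun z => Complex.normSq (u.eval z / E.eval z) with hWdef
  have hWm : Measurable W :=
    Complex.continuous_normSq.measurable.comp (u.continuous.measurable.div E.continuous.measurable)
  have hWc : ContinuousOn W {z | onT z} := by
    apply Complex.continuous_normSq.comp_continuousOn
    exact ContinuousOn.div u.continuous.continuousOn E.continuous.continuousOn
      (fun z hz => hE z hz)
  have iW : Integrable W μ := integrable_of_cm hμ hWm.aestronglyMeasurable hWc
  have i0 : Integrable (fun z => ((W z : ℝ) : ℂ)) μ :=
    integrable_of_cm hμ (Complex.measurable_ofReal.comp hWm).aestronglyMeasurable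
      (Complex.continuous_ofReal.comp_continuousOn hWc)
  have i1 : Integrable (fun z => z * ((W z : ℝ) : ℂ)) μ :=
    integrable_of_cm hμ (measurable_id.mul (Complex.measurable_ofReal.comp hWm)).aestronglyMeasurable
      (continuousOn_id.mul (Complex.continuous_ofReal.comp_continuousOn hWc))
  have i2 : Integrable (fun z => conj' z * ((W z : ℝ) : ℂ)) μ :=
    integrable_of_cm hμ
      ((measurable_conj'.comp measurable_id).mul (Complex.measurable_ofReal.comp hWm)).aestronglyMeasurable
      ((continuous_conj'.comp_continuousOn continuousOn_id).mul
        (Complex.continuous_ofReal.comp_continuousOn hWc))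
  have hm0 : ∫ z, ((W z : ℝ) : ℂ) ∂μ = ((∫ z, W z ∂μ : ℝ) : ℂ) := integral_ofReal
  set m0 : ℝ := ∫ z, W z ∂μ with hm0def
  set m1 : ℂ := ∫ z, z * ((W z : ℝ) : ℂ) ∂μ with hm1def
  have hm1c : ∫ z, conj' z * ((W z : ℝ) : ℂ) ∂μ = conj' m1 := by
    have hfe : (fun z => conj' z * ((W z : ℝ) : ℂ)) = fun z => conj' (z * ((W z : ℝ) : ℂ)) := by
      funext z
      simp only [conj', map_mul, Complex.conj_ofReal]
    rw [hfe, hm1def]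
    exact integral_conj
  have hfin : {z | onT z ∧ W z = 0}.Finite := by
    apply (u.finite_setOf_isRoot hu).subset
    rintro z ⟨hz, hW0⟩
    have := Complex.normSq_eq_zero.mp hW0
    rcases div_eq_zero_iff.mp this with h|h
    · exact h
    · exact absurd h (hE z hz)
  have pos : 0 < m0 :=
    integral_pos_onT hμ iW (fun z _ => Complex.normSq_nonneg _) hfin
  have lt : ‖m1‖ < m0 := by
    rcases eq_or_ne m1 0 with h|h
    · rw [h]; simpa using pos
    · set σ : ℂ := m1 / ((‖m1‖ : ℝ) : ℂ) with hσdef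
      have habsm1 : (0:ℝ) < ‖m1‖ := norm_pos_iff.mpr h
      have hσ : ‖σ‖ = 1 := by
        rw [hσdef, norm_div, Complex.norm_real, Real.norm_eq_abs, abs_of_pos habsm1, div_self (ne_of_gt habsm1)]
      have hre : (conj' σ * m1).re = ‖m1‖ := by
        have hval : conj' σ * m1 = ((‖m1‖ : ℝ) : ℂ) := by
          rw [hσdef, conj', map_div₀, Complex.conj_ofReal]
          rw [div_mul_eq_mul_div, ← Complex.normSq_eq_conj_mul_self, Complex.normSq_eq_norm_sq,
            div_eq_iff (Complex.ofReal_ne_zero.mpr (ne_of_gt habsm1))]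
          push_cast
          ring
        rw [hval, Complex.ofReal_re]
      have hre' : ∀ z, (conj' σ * (z * ((W z : ℝ) : ℂ))).re = (conj' σ * z).re * W z := by
        intro z
        rw [← mul_assoc]
        simp [Complex.mul_re, Complex.ofReal_re, Complex.ofReal_im]
      have hJi1 : Integrable (fun z => (conj' σ * (z * ((W z : ℝ) : ℂ))).re) μ :=
        (i1.const_mul _).re
      have hfuneq : (fun z => (1 - (conj' σ * z).re) * W z)
          = fun z => W z - (conj' σ * (z * ((W z : ℝ) : ℂ))).re := by
        funext z; rw [hre' z]; ring
      have hJint : Integrable (fun z => (1 - (conj' σ * z).re) * W z) μ := by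
        rw [hfuneq]; exact iW.sub hJi1
      have hJpos : 0 < ∫ z, (1 - (conj' σ * z).re) * W z ∂μ := by
        apply integral_pos_onT hμ hJint
        · intro z hz
          have h1 : (conj' σ * z).re ≤ 1 := by
            have := Complex.re_le_norm (conj' σ * z)
            rwa [norm_mul, abs_conj', hσ, one_mul, hz] at this
          have h2 : (0:ℝ) ≤ W z := Complex.normSq_nonneg _
          nlinarith
        · apply (hfin.union (Set.finite_singleton σ)).subset
          rintro z ⟨hz, h0⟩
          rcases mul_eq_zero.mp h0 with h|h
          · right
            have h1 : (conj' σ * z).re = 1 := by linarith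
            have h2 : ‖conj' σ * z‖ = 1 := by
              rw [norm_mul, abs_conj', hσ, one_mul, hz]
            have h3 := unimodular_re_eq_one h2 h1
            have h4 : σ * (conj' σ * z) = σ := by rw [h3, mul_one]
            rw [← mul_assoc, mul_comm σ (conj' σ), conj'_mul_self, Complex.normSq_eq_norm_sq, hσ] at h4
            norm_num at h4
            exact h4
          · exact Or.inl ⟨hz, h⟩
      have hJval : ∫ z, (1 - (conj' σ * z).re) * W z ∂μ = m0 - ‖m1‖ := by
        rw [hfuneq, integral_sub iW hJi1]
        congr 1
        have : ∫ z, (conj' σ * (z * ((W z : ℝ) : ℂ))).re ∂μ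
            = (∫ z, conj' σ * (z * ((W z : ℝ) : ℂ)) ∂μ).re := integral_re (i1.const_mul _)
        rw [this, integral_const_mul, ← hm1def, hre]
      rw [hJval] at hJpos
      linarith
  exact ⟨iW, i0, i1, i2, hm0, rfl, hm1c, pos, lt⟩

lemma key1 {v Q Dz Ez : ℂ} (hD : Dz ≠ 0) (hE : Ez ≠ 0) :
    conj' (v * Q / (Dz * Ez)) * (Q / Dz)
      = (conj' v * Ez) * ((Complex.normSq (Q / (Dz * Ez)) : ℝ) : ℂ) := by
  rw [← conj'_mul_self]
  simp only [conj', map_div₀, map_mul]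
  have h1 : (starRingEnd ℂ) Dz ≠ 0 := by simpa using hD
  have h2 : (starRingEnd ℂ) Ez ≠ 0 := by simpa using hE
  field_simp

lemma normcmp {m0 : ℝ} {m1 a : ℂ} (ha : ‖a‖ < 1) (hlt : ‖m1‖ < m0) :
    ‖m1 - a * ((m0:ℝ):ℂ)‖ < ‖((m0:ℝ):ℂ) - conj' a * m1‖ := by
  have h1 : Complex.normSq m1 < m0^2 := by
    nlinarith [Complex.sq_norm m1, norm_nonneg m1]
  have h2 : Complex.normSq a < 1 := by
    nlinarith [Complex.sq_norm a, norm_nonneg a]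
  have key : Complex.normSq (((m0:ℝ):ℂ) - conj' a * m1) - Complex.normSq (m1 - a * ((m0:ℝ):ℂ))
      = (1 - Complex.normSq a) * (m0^2 - Complex.normSq m1) := by
    simp only [Complex.normSq_apply, Complex.sub_re, Complex.sub_im, Complex.mul_re,
      Complex.mul_im, Complex.ofReal_re, Complex.ofReal_im, conj', Complex.conj_re,
      Complex.conj_im]
    ring
  have hprod : 0 < (1 - Complex.normSq a) * (m0^2 - Complex.normSq m1) :=
    mul_pos (by linarith) (by linarith)
  rw [Complex.norm_def, Complex.norm_def]
  exact Real.sqrt_lt_sqrt (Complex.normSq_nonneg _) (by linarith)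

lemma finalA {m0 : ℝ} {m1 a z0 : ℂ} (hpos : 0 < m0) (hlt : ‖m1‖ < m0)
    (ha : ‖a‖ < 1)
    (heq : (-conj' a - conj' z0) * ((m0:ℝ):ℂ) + (conj' z0 * conj' a) * m1 + conj' m1 = 0) :
    ‖z0‖ < 1 := by
  have hcmp := normcmp ha hlt
  have hden : (((m0:ℝ):ℂ) - conj' a * m1) ≠ 0 := by
    intro h
    rw [h] at hcmp
    simp only [norm_zero] at hcmp
    exact absurd hcmp (norm_nonneg _).not_gt
  have hz : conj' z0 * (((m0:ℝ):ℂ) - conj' a * m1) = conj' m1 - conj' a * ((m0:ℝ):ℂ) := by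
    linear_combination -heq
  have hnum : ‖conj' m1 - conj' a * ((m0:ℝ):ℂ)‖ = ‖m1 - a * ((m0:ℝ):ℂ)‖ := by
    rw [show conj' m1 - conj' a * ((m0:ℝ):ℂ) = conj' (m1 - a * ((m0:ℝ):ℂ)) by
      simp only [conj', map_sub, map_mul, Complex.conj_ofReal]]
    exact abs_conj' _
  have habs : ‖z0‖ * ‖((m0:ℝ):ℂ) - conj' a * m1‖
      = ‖m1 - a * ((m0:ℝ):ℂ)‖ := by
    rw [← hnum, ← hz, norm_mul, abs_conj']
  have hD0 : 0 < ‖((m0:ℝ):ℂ) - conj' a * m1‖ := norm_pos_iff.mpr hden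
  nlinarith [norm_nonneg z0]

lemma finalB0 {m0 : ℝ} {m1 z0 : ℂ} (hpos : 0 < m0) (hlt : ‖m1‖ < m0)
    (heq : conj' z0 * m1 - ((m0:ℝ):ℂ) = 0) : 1 < ‖z0‖ := by
  have hz : conj' z0 * m1 = ((m0:ℝ):ℂ) := by linear_combination heq
  have habs : ‖z0‖ * ‖m1‖ = m0 := by
    have := congrArg norm hz
    rwa [norm_mul, abs_conj', Complex.norm_real, Real.norm_eq_abs, abs_of_pos hpos] at this
  have hm1 : 0 < ‖m1‖ := by
    rcases (norm_nonneg m1).lt_or_eq with h|h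
    · exact h
    · exfalso; rw [← h] at habs; simp at habs; linarith
  nlinarith
lemma finalB1 {m0 : ℝ} {m1 a z0 : ℂ} (hpos : 0 < m0) (hlt : ‖m1‖ < m0)
    (ha : ‖a‖ < 1) (ha0 : a ≠ 0)
    (heq : (-a⁻¹ - conj' z0) * ((m0:ℝ):ℂ) + (conj' z0 * a⁻¹) * m1 + conj' m1 = 0) :
    1 < ‖z0‖ := by
  have hcmp := normcmp ha hlt
  have hz : conj' z0 * (m1 - a * ((m0:ℝ):ℂ)) = ((m0:ℝ):ℂ) - a * conj' m1 := by
    field_simp [ha0] at heq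
    first
    | linear_combination heq
    | linear_combination -heq
    | linear_combination a * heq
    | linear_combination -a * heq
  have hnum : ‖((m0:ℝ):ℂ) - a * conj' m1‖
      = ‖((m0:ℝ):ℂ) - conj' a * m1‖ := by
    rw [show ((m0:ℝ):ℂ) - a * conj' m1 = conj' (((m0:ℝ):ℂ) - conj' a * m1) by
      simp only [conj', map_sub, map_mul, Complex.conj_ofReal, Complex.conj_conj]]
    exact abs_conj' _
  have hden : (m1 - a * ((m0:ℝ):ℂ)) ≠ 0 := by
    intro h
    rw [h, mul_zero] at hz
    rw [← hz] at hnum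
    simp only [norm_zero] at hnum
    rw [h] at hcmp
    simp only [norm_zero] at hcmp
    linarith [hcmp, hnum.symm.le]
  have habs : ‖z0‖ * ‖m1 - a * ((m0:ℝ):ℂ)‖
      = ‖((m0:ℝ):ℂ) - conj' a * m1‖ := by
    rw [← hnum, ← hz, norm_mul, abs_conj']
  have hD0 : 0 < ‖m1 - a * ((m0:ℝ):ℂ)‖ := norm_pos_iff.mpr hden
  nlinarith [norm_nonneg z0]

end Moments

section PolyFacts

open Polynomial MeasureTheory

lemma wA_eval (α : ℕ → ℂ) (j : ℕ) (z : ℂ) : (wA α j).eval z = 1 - conj' (α j) * z := by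
  simp [wA]

lemma wB_eval (α : ℕ → ℂ) (j : ℕ) (z : ℂ) :
    (wB α j).eval z = if α j = 0 then -z else 1 - (α j)⁻¹ * z := by
  rw [wB]; split_ifs <;> simp

lemma wA_ne {α : ℕ → ℂ} (hα : ∀ j, ‖α j‖ < 1) (j : ℕ) {z : ℂ} (hz : onT z) :
    (wA α j).eval z ≠ 0 := by
  rw [wA_eval]; intro h
  have h1 : conj' (α j) * z = 1 := by linear_combination -h
  have h2 := congrArg norm h1
  rw [norm_mul, abs_conj', hz, mul_one, norm_one] at h2
  exact absurd h2 (ne_of_lt (hα j))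

lemma wB_ne {α : ℕ → ℂ} (hα : ∀ j, ‖α j‖ < 1) (j : ℕ) {z : ℂ} (hz : onT z) :
    (wB α j).eval z ≠ 0 := by
  rw [wB_eval]; split_ifs with h
  · simpa using onT_ne_zero hz
  · intro h0
    have h1 : (α j)⁻¹ * z = 1 := by linear_combination -h0
    have h2 : α j = z := (inv_mul_eq_one₀ h).mp h1
    rw [← h2] at hz
    exact absurd hz (ne_of_lt (hα j))

lemma wG_ne {α : ℕ → ℂ} (hα : ∀ j, ‖α j‖ < 1) (c : ℕ → Bool) (j : ℕ) {z : ℂ}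
    (hz : onT z) : (wG α c j).eval z ≠ 0 := by
  rw [wG]; split_ifs
  · exact wA_ne hα j hz
  · exact wB_ne hα j hz

lemma eval_prod_ne {s : Finset ℕ} {f : ℕ → Polynomial ℂ} {z : ℂ}
    (h : ∀ j ∈ s, (f j).eval z ≠ 0) : (∏ j ∈ s, f j).eval z ≠ 0 := by
  rw [Polynomial.eval_prod]; exact Finset.prod_ne_zero_iff.mpr h

lemma piA_ne {α : ℕ → ℂ} (hα : ∀ j, ‖α j‖ < 1) (n : ℕ) {z : ℂ} (hz : onT z) :
    (piA α n).eval z ≠ 0 := eval_prod_ne (fun j _ => wA_ne hα j hz)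

lemma piB_ne {α : ℕ → ℂ} (hα : ∀ j, ‖α j‖ < 1) (n : ℕ) {z : ℂ} (hz : onT z) :
    (piB α n).eval z ≠ 0 := eval_prod_ne (fun j _ => wB_ne hα j hz)

lemma piG_ne {α : ℕ → ℂ} (hα : ∀ j, ‖α j‖ < 1) (c : ℕ → Bool) (n : ℕ) {z : ℂ}
    (hz : onT z) : (piG α c n).eval z ≠ 0 := eval_prod_ne (fun j _ => wG_ne hα c j hz)

lemma piA_succ (α : ℕ → ℂ) (m : ℕ) : piA α (m+1) = piA α m * wA α (m+1) :=
  Finset.prod_Icc_succ_top (by omega) _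

lemma piB_succ (α : ℕ → ℂ) (m : ℕ) : piB α (m+1) = piB α m * wB α (m+1) :=
  Finset.prod_Icc_succ_top (by omega) _

lemma piG_succ (α : ℕ → ℂ) (c : ℕ → Bool) (m : ℕ) : piG α c (m+1) = piG α c m * wG α c (m+1) :=
  Finset.prod_Icc_succ_top (by omega) _

lemma orthInt {μ : MeasureTheory.Measure ℂ} {pip : ℕ → Polynomial ℂ} {φ : ℕ → ℂ → ℂ}
    {p : ℕ → Polynomial ℂ} (h : IsORF μ pip φ p) (m : ℕ) (r : Polynomial ℂ)
    (hr : r.natDegree ≤ m) :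
    ∫ z, conj' ((p (m+1)).eval z / (pip (m+1)).eval z) * (r.eval z / (pip m).eval z) ∂μ = 0 := by
  have hmem : (fun z => r.eval z / (pip m).eval z) ∈ Lsp pip ((m+1) - 1) :=
    ⟨r, by simpa using hr, fun z _ => rfl⟩
  have horth := h.orth (m+1) (by omega) _ hmem
  rw [inn] at horth
  simp only [h.rep] at horth
  exact horth

lemma p_ne_zero {μ : MeasureTheory.Measure ℂ} {pip : ℕ → Polynomial ℂ} {φ : ℕ → ℂ → ℂ}
    {p : ℕ → Polynomial ℂ} (h : IsORF μ pip φ p) (n : ℕ) : p n ≠ 0 := by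
  intro h0
  have hn := h.norm n
  rw [inn] at hn
  simp only [h.rep, h0, Polynomial.eval_zero, zero_div, mul_zero, integral_zero] at hn
  exact absurd hn (by norm_num)

lemma pstar_eval_of_ne {n : ℕ} {p : Polynomial ℂ} (hdeg : p.natDegree ≤ n) {z : ℂ} (hz : z ≠ 0) :
    (pstar n p).eval z = z^n * conj' (p.eval ((conj' z)⁻¹)) := by
  rw [pstar, Polynomial.eval_finset_sum,
    Polynomial.eval_eq_sum_range' (lt_of_le_of_lt hdeg (Nat.lt_succ_self n))]
  rw [show conj' (∑ i ∈ Finset.range (n+1), p.coeff i * ((conj' z)⁻¹) ^ i)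
      = ∑ i ∈ Finset.range (n+1), conj' (p.coeff i) * (z⁻¹) ^ i by
    rw [conj', map_sum]
    refine Finset.sum_congr rfl (fun k _ => ?_)
    rw [map_mul, map_pow, map_inv₀]
    rw [show ((starRingEnd ℂ) (conj' z)) = z from Complex.conj_conj z]
    rfl]
  rw [Finset.mul_sum]
  refine Finset.sum_congr rfl (fun k hk => ?_)
  simp only [Polynomial.eval_mul, Polynomial.eval_C, Polynomial.eval_pow, Polynomial.eval_X]
  have hk' : k ≤ n := Nat.lt_succ_iff.mp (Finset.mem_range.mp hk)
  have hpow : z ^ (n - k) = z ^ n * (z⁻¹) ^ k := by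
    rw [inv_pow, eq_comm, mul_inv_eq_iff_eq_mul₀ (pow_ne_zero _ hz), ← pow_add]
    congr 1
    omega
  rw [hpow]
  ring

lemma pstar_eval_zero (n : ℕ) (p : Polynomial ℂ) : (pstar n p).eval 0 = conj' (p.coeff n) := by
  rw [pstar, Polynomial.eval_finset_sum, Finset.sum_eq_single n]
  · simp
  · intro k hk hkn
    have hk' : k ≤ n := Nat.lt_succ_iff.mp (Finset.mem_range.mp hk)
    simp only [Polynomial.eval_mul, Polynomial.eval_C, Polynomial.eval_pow, Polynomial.eval_X]
    rw [zero_pow (by omega : n - k ≠ 0), mul_zero]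
  · intro hnot
    exact absurd (Finset.self_mem_range_succ n) hnot

lemma pstar_zeros_gt {p : Polynomial ℂ} {n : ℕ} (hp : p ≠ 0) (hdeg : p.natDegree = n)
    (hz : ∀ z, p.eval z = 0 → ‖z‖ < 1) :
    ∀ z, (pstar n p).eval z = 0 → 1 < ‖z‖ := by
  intro z h0
  rcases eq_or_ne z 0 with rfl|hzne
  · rw [pstar_eval_zero] at h0
    have hlc : p.coeff n ≠ 0 := by
      rw [← hdeg, Polynomial.coeff_natDegree]
      exact Polynomial.leadingCoeff_ne_zero.mpr hp
    rw [conj'] at h0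
    exact absurd ((_root_.map_eq_zero _).mp h0) hlc
  · rw [pstar_eval_of_ne hdeg.le hzne] at h0
    rcases mul_eq_zero.mp h0 with h|h
    · exact absurd h (pow_ne_zero _ hzne)
    · rw [conj'] at h
      have hroot := hz _ ((_root_.map_eq_zero _).mp h)
      rw [norm_inv, abs_conj'] at hroot
      have hza : 0 < ‖z‖ := norm_pos_iff.mpr hzne
      have hy : (0:ℝ) ≤ (‖z‖)⁻¹ := by positivity
      nlinarith [mul_inv_cancel₀ (ne_of_gt hza)]

lemma pstar_zeros_lt {p : Polynomial ℂ} {n : ℕ} (hdeg : p.natDegree ≤ n)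
    (hz : ∀ z, p.eval z = 0 → 1 < ‖z‖) :
    ∀ z, (pstar n p).eval z = 0 → ‖z‖ < 1 := by
  intro z h0
  rcases eq_or_ne z 0 with rfl|hzne
  · simpa using one_pos
  · rw [pstar_eval_of_ne hdeg hzne] at h0
    rcases mul_eq_zero.mp h0 with h|h
    · exact absurd h (pow_ne_zero _ hzne)
    · rw [conj'] at h
      have hroot := hz _ ((_root_.map_eq_zero _).mp h)
      rw [norm_inv, abs_conj'] at hroot
      have hza : 0 < ‖z‖ := norm_pos_iff.mpr hzne
      nlinarith [mul_inv_cancel₀ (ne_of_gt hza)]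

lemma span_lemma {w p d : Polynomial ℂ} {n : ℕ} (hn : 1 ≤ n) (hp : p.natDegree ≤ n)
    (hd : d.natDegree ≤ n)
    (hcase : (∃ u ρ : ℂ, u ≠ 0 ∧ w = Polynomial.C u * (Polynomial.X - Polynomial.C ρ) ∧
        p.eval ρ ≠ 0) ∨ (w = 1 ∧ p.natDegree = n)) :
    ∃ (r : Polynomial ℂ) (cc : ℂ), r.natDegree ≤ n - 1 ∧ d = r * w + Polynomial.C cc * p := by
  rcases hcase with ⟨u, ρ, hu, hw, hpρ⟩ | ⟨hw, hpdeg⟩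
  · set cc := d.eval ρ / p.eval ρ with hcc
    set e := d - Polynomial.C cc * p with he
    have heρ : e.IsRoot ρ := by
      simp only [Polynomial.IsRoot, he, Polynomial.eval_sub, Polynomial.eval_mul,
        Polynomial.eval_C, hcc]
      field_simp
      ring
    set q := e /ₘ (X - C ρ) with hq
    have hfac : (X - C ρ) * q = e := mul_divByMonic_eq_iff_isRoot.mpr heρ
    refine ⟨Polynomial.C u⁻¹ * q, cc, ?_, ?_⟩
    · have hqdeg : q.natDegree ≤ n - 1 := by
        rcases eq_or_ne q 0 with h|h
        · rw [h]; simp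
        · have hedeg : e.natDegree ≤ n := by
            refine le_trans (Polynomial.natDegree_sub_le _ _) (max_le hd ?_)
            exact le_trans (Polynomial.natDegree_mul_le) (by simp [Polynomial.natDegree_C, hp])
          have : e.natDegree = 1 + q.natDegree := by
            rw [← hfac, Polynomial.natDegree_mul (Polynomial.X_sub_C_ne_zero ρ) h,
              Polynomial.natDegree_X_sub_C]
          omega
      exact le_trans (Polynomial.natDegree_mul_le)
        (by simpa [Polynomial.natDegree_C] using hqdeg)
    · have hCu : Polynomial.C u⁻¹ * q * w = e := by
        rw [hw]
        have h2 : Polynomial.C u⁻¹ * q * (Polynomial.C u * (X - C ρ))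
            = (Polynomial.C u⁻¹ * Polynomial.C u) * ((X - C ρ) * q) := by ring
        rw [h2, ← Polynomial.C_mul, inv_mul_cancel₀ hu, Polynomial.C_1, one_mul, hfac]
      rw [hCu, he]; ring
  · have hp0 : p ≠ 0 := by
      intro h
      rw [h] at hpdeg
      simp only [Polynomial.natDegree_zero] at hpdeg
      omega
    have hpn : p.coeff n ≠ 0 := by
      rw [← hpdeg, Polynomial.coeff_natDegree]
      exact Polynomial.leadingCoeff_ne_zero.mpr hp0
    set cc := d.coeff n / p.coeff n with hcc
    set r := d - Polynomial.C cc * p with hr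
    refine ⟨r, cc, ?_, by rw [hw, mul_one, hr]; ring⟩
    have hrn : r.natDegree ≤ n := by
      refine le_trans (Polynomial.natDegree_sub_le _ _) (max_le hd ?_)
      exact le_trans (Polynomial.natDegree_mul_le) (by simp [Polynomial.natDegree_C, hp])
    have hrcoeff : r.coeff n = 0 := by
      simp only [hr, Polynomial.coeff_sub, Polynomial.coeff_C_mul, hcc]
      field_simp
      ring
    by_contra hcon
    push_neg at hcon
    have hr0 : r ≠ 0 := by
      intro h
      rw [h] at hcon
      simp at hcon
    have hrdeg : r.natDegree = n := by omega
    have : r.coeff n ≠ 0 := by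
      rw [← hrdeg, Polynomial.coeff_natDegree]
      exact Polynomial.leadingCoeff_ne_zero.mpr hr0
    exact this hrcoeff

end PolyFacts

section Master

open Polynomial MeasureTheory

lemma masterA {μ : MeasureTheory.Measure ℂ} (hμ : CircleMeasure μ) (D : Polynomial ℂ)
    (hD : ∀ z, onT z → D.eval z ≠ 0) {a : ℂ} (ha : ‖a‖ < 1)
    {p : Polynomial ℂ} (hp : p ≠ 0) {m : ℕ} (hdeg : p.natDegree ≤ m + 1)
    (HO : ∀ r : Polynomial ℂ, r.natDegree ≤ m →
      ∫ z, conj' (p.eval z / (D.eval z * (1 - conj' a * z))) * (r.eval z / D.eval z) ∂μ = 0) :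
    (∀ z0, p.eval z0 = 0 → ‖z0‖ < 1) ∧ p.natDegree = m + 1 := by
  set wp : Polynomial ℂ := 1 - Polynomial.C (conj' a) * Polynomial.X with hwp
  have hwe : ∀ z : ℂ, wp.eval z = 1 - conj' a * z := by intro z; simp [hwp]
  have hwne : ∀ z, onT z → (1 - conj' a * z) ≠ 0 := by
    intro z hz h
    have h1 : conj' a * z = 1 := by linear_combination -h
    have h2 := congrArg norm h1
    rw [norm_mul, abs_conj', hz, mul_one, norm_one] at h2
    exact absurd h2 (ne_of_lt ha)
  have hEne : ∀ z, onT z → (D * wp).eval z ≠ 0 := by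
    intro z hz
    rw [Polynomial.eval_mul, hwe]
    exact mul_ne_zero (hD z hz) (hwne z hz)
  constructor
  · intro z0 hz0
    have hfac : (X - C z0) * (p /ₘ (X - C z0)) = p := mul_divByMonic_eq_iff_isRoot.mpr hz0
    set q := p /ₘ (X - C z0) with hqdef
    have hq0 : q ≠ 0 := by intro h; rw [h, mul_zero] at hfac; exact hp hfac.symm
    have hqdeg : q.natDegree ≤ m := by
      have h1 : p.natDegree = 1 + q.natDegree := by
        rw [← hfac, Polynomial.natDegree_mul (Polynomial.X_sub_C_ne_zero z0) hq0,
          Polynomial.natDegree_X_sub_C]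
      omega
    have mf := moments hμ q (D * wp) hq0 hEne
    set W : ℂ → ℝ := fun z => Complex.normSq (q.eval z / (D * wp).eval z) with hW
    set m0 : ℝ := ∫ z, W z ∂μ with hm0
    set m1 : ℂ := ∫ z, z * ((W z : ℝ) : ℂ) ∂μ with hm1
    have hOq := HO q hqdeg
    have hcongr : ∫ z, conj' (p.eval z / (D.eval z * (1 - conj' a * z))) * (q.eval z / D.eval z) ∂μ
        = ∫ z, ((-conj' a - conj' z0) * ((W z : ℝ) : ℂ)
            + ((conj' z0 * conj' a) * (z * ((W z : ℝ) : ℂ)) + (conj' z * ((W z : ℝ) : ℂ)))) ∂μ := by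
      refine integral_congr_ae ?_
      filter_upwards [ae_onT hμ] with z hz
      have hDz := hD z hz
      have hwz := hwne z hz
      have hpz : p.eval z = (z - z0) * q.eval z := by
        rw [← hfac]; simp [Polynomial.eval_mul]
      rw [hpz, key1 hDz hwz]
      have hWz : W z = Complex.normSq (q.eval z / (D.eval z * (1 - conj' a * z))) := by
        rw [hW]; simp [Polynomial.eval_mul, hwe]
      rw [← hWz]
      have hzz := onT_mul_conj hz
      simp only [conj', map_sub] at hzz ⊢
      linear_combination (-((starRingEnd ℂ) a) * ((W z : ℝ) : ℂ)) * hzz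
    rw [hcongr] at hOq
    have iA : Integrable (fun z => (-conj' a - conj' z0) * ((W z : ℝ) : ℂ)) μ :=
      mf.i0.const_mul _
    have iB : Integrable (fun z => (conj' z0 * conj' a) * (z * ((W z : ℝ) : ℂ))) μ :=
      mf.i1.const_mul _
    have iBC : Integrable (fun z => (conj' z0 * conj' a) * (z * ((W z : ℝ) : ℂ))
        + conj' z * ((W z : ℝ) : ℂ)) μ := iB.add mf.i2
    rw [integral_add iA iBC, integral_add iB mf.i2,
      integral_const_mul, integral_const_mul, mf.hm0, mf.hm1c] at hOq
    exact finalA mf.pos mf.lt ha (by linear_combination hOq)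
  · by_contra hne
    have hdeg' : p.natDegree ≤ m := by omega
    have mf := moments hμ p (D * wp) hp hEne
    set W : ℂ → ℝ := fun z => Complex.normSq (p.eval z / (D * wp).eval z) with hW
    set m0 : ℝ := ∫ z, W z ∂μ with hm0
    set m1 : ℂ := ∫ z, z * ((W z : ℝ) : ℂ) ∂μ with hm1
    have hOp := HO p hdeg'
    have hcongr : ∫ z, conj' (p.eval z / (D.eval z * (1 - conj' a * z))) * (p.eval z / D.eval z) ∂μ
        = ∫ z, (((W z : ℝ) : ℂ) - conj' a * (z * ((W z : ℝ) : ℂ))) ∂μ := by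
      refine integral_congr_ae ?_
      filter_upwards [ae_onT hμ] with z hz
      have hDz := hD z hz
      have hwz := hwne z hz
      rw [show p.eval z / (D.eval z * (1 - conj' a * z))
          = (1 : ℂ) * p.eval z / (D.eval z * (1 - conj' a * z)) by ring]
      rw [key1 hDz hwz]
      have hWz : W z = Complex.normSq (p.eval z / (D.eval z * (1 - conj' a * z))) := by
        rw [hW]; simp [Polynomial.eval_mul, hwe]
      rw [← hWz]
      simp only [conj', map_one]
      ring
    rw [hcongr] at hOp
    have iB : Integrable (fun z => conj' a * (z * ((W z : ℝ) : ℂ))) μ := mf.i1.const_mul _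
    rw [integral_sub mf.i0 iB, integral_const_mul, mf.hm0] at hOp
    have heq2 : ((m0 : ℝ) : ℂ) = conj' a * m1 := by linear_combination hOp
    have habs := congrArg norm heq2
    rw [Complex.norm_real, Real.norm_eq_abs, abs_of_pos mf.pos, norm_mul, abs_conj'] at habs
    nlinarith [mf.pos, mf.lt, ha, norm_nonneg m1,
      norm_nonneg a]

lemma masterB {μ : MeasureTheory.Measure ℂ} (hμ : CircleMeasure μ) (D : Polynomial ℂ)
    (hD : ∀ z, onT z → D.eval z ≠ 0) {a : ℂ} (ha : ‖a‖ < 1)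
    {p : Polynomial ℂ} (hp : p ≠ 0) {m : ℕ} (hdeg : p.natDegree ≤ m + 1)
    (HO : ∀ r : Polynomial ℂ, r.natDegree ≤ m →
      ∫ z, conj' (p.eval z / (D.eval z * (if a = 0 then -z else 1 - a⁻¹ * z)))
        * (r.eval z / D.eval z) ∂μ = 0) :
    ∀ z0, p.eval z0 = 0 → 1 < ‖z0‖ := by
  set wp : Polynomial ℂ := if a = 0 then -Polynomial.X
    else 1 - Polynomial.C a⁻¹ * Polynomial.X with hwp
  have hwe : ∀ z : ℂ, wp.eval z = (if a = 0 then -z else 1 - a⁻¹ * z) := by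
    intro z; rw [hwp]; split_ifs <;> simp
  have hwne : ∀ z, onT z → (if a = 0 then -z else 1 - a⁻¹ * z) ≠ 0 := by
    intro z hz
    split_ifs with h
    · simpa using onT_ne_zero hz
    · intro h0
      have h1 : a⁻¹ * z = 1 := by linear_combination -h0
      have h2 : a = z := (inv_mul_eq_one₀ h).mp h1
      rw [← h2] at hz
      exact absurd hz (ne_of_lt ha)
  have hEne : ∀ z, onT z → (D * wp).eval z ≠ 0 := by
    intro z hz
    rw [Polynomial.eval_mul, hwe]
    exact mul_ne_zero (hD z hz) (hwne z hz)
  intro z0 hz0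
  have hfac : (X - C z0) * (p /ₘ (X - C z0)) = p := mul_divByMonic_eq_iff_isRoot.mpr hz0
  set q := p /ₘ (X - C z0) with hqdef
  have hq0 : q ≠ 0 := by intro h; rw [h, mul_zero] at hfac; exact hp hfac.symm
  have hqdeg : q.natDegree ≤ m := by
    have h1 : p.natDegree = 1 + q.natDegree := by
      rw [← hfac, Polynomial.natDegree_mul (Polynomial.X_sub_C_ne_zero z0) hq0,
        Polynomial.natDegree_X_sub_C]
    omega
  have mf := moments hμ q (D * wp) hq0 hEne
  set W : ℂ → ℝ := fun z => Complex.normSq (q.eval z / (D * wp).eval z) with hW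
  set m0 : ℝ := ∫ z, W z ∂μ with hm0
  set m1 : ℂ := ∫ z, z * ((W z : ℝ) : ℂ) ∂μ with hm1
  have hOq := HO q hqdeg
  by_cases ha0 : a = 0
  · -- wp = -X
    have hcongr : ∫ z, conj' (p.eval z / (D.eval z * (if a = 0 then -z else 1 - a⁻¹ * z)))
          * (q.eval z / D.eval z) ∂μ
        = ∫ z, ((-1 : ℂ) * ((W z : ℝ) : ℂ) + conj' z0 * (z * ((W z : ℝ) : ℂ))) ∂μ := by
      refine integral_congr_ae ?_
      filter_upwards [ae_onT hμ] with z hz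
      have hDz := hD z hz
      have hwz := hwne z hz
      simp only [ha0, if_true] at hwz ⊢
      have hpz : p.eval z = (z - z0) * q.eval z := by
        rw [← hfac]; simp [Polynomial.eval_mul]
      rw [hpz, key1 hDz hwz]
      have hWz : W z = Complex.normSq (q.eval z / (D.eval z * -z)) := by
        rw [hW]; simp [Polynomial.eval_mul, hwe, ha0]
      rw [← hWz]
      have hzz := onT_mul_conj hz
      simp only [conj', map_sub] at hzz ⊢
      linear_combination (-((W z : ℝ) : ℂ)) * hzz
    rw [hcongr] at hOq
    have iA : Integrable (fun z => (-1 : ℂ) * ((W z : ℝ) : ℂ)) μ := mf.i0.const_mul _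
    have iB : Integrable (fun z => conj' z0 * (z * ((W z : ℝ) : ℂ))) μ := mf.i1.const_mul _
    rw [integral_add iA iB, integral_const_mul, integral_const_mul, mf.hm0] at hOq
    exact finalB0 mf.pos mf.lt (by linear_combination hOq)
  · have hcongr : ∫ z, conj' (p.eval z / (D.eval z * (if a = 0 then -z else 1 - a⁻¹ * z)))
          * (q.eval z / D.eval z) ∂μ
        = ∫ z, ((-a⁻¹ - conj' z0) * ((W z : ℝ) : ℂ)
            + ((conj' z0 * a⁻¹) * (z * ((W z : ℝ) : ℂ)) + (conj' z * ((W z : ℝ) : ℂ)))) ∂μ := by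
      refine integral_congr_ae ?_
      filter_upwards [ae_onT hμ] with z hz
      have hDz := hD z hz
      have hwz := hwne z hz
      simp only [ha0, if_false] at hwz ⊢
      have hpz : p.eval z = (z - z0) * q.eval z := by
        rw [← hfac]; simp [Polynomial.eval_mul]
      rw [hpz, key1 hDz hwz]
      have hWz : W z = Complex.normSq (q.eval z / (D.eval z * (1 - a⁻¹ * z))) := by
        rw [hW]; simp [Polynomial.eval_mul, hwe, ha0]
      rw [← hWz]
      have hzz := onT_mul_conj hz
      simp only [conj', map_sub] at hzz ⊢
      linear_combination (-a⁻¹ * ((W z : ℝ) : ℂ)) * hzz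
    rw [hcongr] at hOq
    have iA : Integrable (fun z => (-a⁻¹ - conj' z0) * ((W z : ℝ) : ℂ)) μ := mf.i0.const_mul _
    have iB : Integrable (fun z => (conj' z0 * a⁻¹) * (z * ((W z : ℝ) : ℂ))) μ :=
      mf.i1.const_mul _
    have iBC : Integrable (fun z => (conj' z0 * a⁻¹) * (z * ((W z : ℝ) : ℂ))
        + conj' z * ((W z : ℝ) : ℂ)) μ := iB.add mf.i2
    rw [integral_add iA iBC, integral_add iB mf.i2,
      integral_const_mul, integral_const_mul, mf.hm0, mf.hm1c] at hOq
    exact finalB1 mf.pos mf.lt ha ha0 (by linear_combination hOq)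

end Master

section Apply

open Polynomial MeasureTheory

variable {μ : MeasureTheory.Measure ℂ} {α : ℕ → ℂ} {c : ℕ → Bool}

lemma zerosA (hμ : CircleMeasure μ) (hα : ∀ j, ‖α j‖ < 1)
    {φA : ℕ → ℂ → ℂ} {pA : ℕ → Polynomial ℂ} (hA : IsORF μ (piA α) φA pA) (n : ℕ) :
    (∀ z, (pA n).eval z = 0 → ‖z‖ < 1) ∧ (pA n).natDegree = n := by
  cases n with
  | zero =>
    rw [hA.p0]
    exact ⟨fun z h => by simp at h, Polynomial.natDegree_one⟩
  | succ m =>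
    apply masterA hμ (piA α m) (fun z hz => piA_ne hα m hz) (hα (m+1))
      (p_ne_zero hA (m+1)) (hA.deg (m+1))
    intro r hr
    have h := orthInt hA m r hr
    simp only [piA_succ α m, Polynomial.eval_mul, wA_eval] at h
    exact h

lemma zerosB (hμ : CircleMeasure μ) (hα : ∀ j, ‖α j‖ < 1)
    {φB : ℕ → ℂ → ℂ} {pB : ℕ → Polynomial ℂ} (hB : IsORF μ (piB α) φB pB) (n : ℕ) :
    ∀ z, (pB n).eval z = 0 → 1 < ‖z‖ := by
  cases n with
  | zero =>
    rw [hB.p0]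
    exact fun z h => by simp at h
  | succ m =>
    apply masterB hμ (piB α m) (fun z hz => piB_ne hα m hz) (hα (m+1))
      (p_ne_zero hB (m+1)) (hB.deg (m+1))
    intro r hr
    have h := orthInt hB m r hr
    simp only [piB_succ α m, Polynomial.eval_mul, wB_eval] at h
    exact h

lemma zerosG_true (hμ : CircleMeasure μ) (hα : ∀ j, ‖α j‖ < 1)
    {φG : ℕ → ℂ → ℂ} {pG : ℕ → Polynomial ℂ} (hG : IsORF μ (piG α c) φG pG) (m : ℕ)
    (hc : c (m+1) = true) :
    (∀ z, (pG (m+1)).eval z = 0 → ‖z‖ < 1) ∧ (pG (m+1)).natDegree = m + 1 := by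
  apply masterA hμ (piG α c m) (fun z hz => piG_ne hα c m hz) (hα (m+1))
    (p_ne_zero hG (m+1)) (hG.deg (m+1))
  intro r hr
  have h := orthInt hG m r hr
  simp only [piG_succ α c m, wG, hc, if_true, Polynomial.eval_mul, wA_eval] at h
  exact h

lemma zerosG_false (hμ : CircleMeasure μ) (hα : ∀ j, ‖α j‖ < 1)
    {φG : ℕ → ℂ → ℂ} {pG : ℕ → Polynomial ℂ} (hG : IsORF μ (piG α c) φG pG) (m : ℕ)
    (hc : c (m+1) = false) :
    ∀ z, (pG (m+1)).eval z = 0 → 1 < ‖z‖ := by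
  apply masterB hμ (piG α c m) (fun z hz => piG_ne hα c m hz) (hα (m+1))
    (p_ne_zero hG (m+1)) (hG.deg (m+1))
  intro r hr
  have h := orthInt hG m r hr
  simp only [piG_succ α c m, wG, hc, Bool.false_eq_true, if_false, Polynomial.eval_mul, wB_eval] at h
  exact h

end Apply

section Transfer

open Polynomial MeasureTheory

variable {μ : MeasureTheory.Measure ℂ} {α : ℕ → ℂ} {c : ℕ → Bool}

lemma conj_ne_zero {x : ℂ} (h : x ≠ 0) : (starRingEnd ℂ) x ≠ 0 := by
  intro h0
  apply h
  have := congrArg (starRingEnd ℂ) h0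
  simpa using this

lemma factor_cmp (j : ℕ) {z : ℂ} (hz : onT z) :
    conj' ((wA α j).eval z) * (wA α j).eval z
      = (if α j = 0 then 1 else conj' (α j) * α j) *
        (conj' ((wB α j).eval z) * (wB α j).eval z) := by
  have hzz := onT_mul_conj hz
  rw [wA_eval, wB_eval]
  split_ifs with h
  · simp only [h, conj', map_zero, zero_mul, sub_zero, map_one, one_mul, map_neg, mul_neg,
      neg_mul, neg_neg] at *
    linear_combination -hzz
  · have hab : (α j) * (1 - (α j)⁻¹ * z) = α j - z := by field_simp
    have hR : (conj' (α j) * α j) * (conj' (1 - (α j)⁻¹ * z) * (1 - (α j)⁻¹ * z))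
        = conj' (α j - z) * (α j - z) := by
      rw [← hab]
      simp only [conj', map_mul]
      ring
    rw [hR]
    simp only [conj', map_sub, map_mul, map_one, Complex.conj_conj] at *
    linear_combination ((starRingEnd ℂ) (α j) * (α j) - 1) * hzz

lemma factor_cmp' (j : ℕ) {z : ℂ} (hz : onT z) :
    conj' ((wB α j).eval z) * (wB α j).eval z
      = (if α j = 0 then 1 else conj' (α j) * α j)⁻¹ *
        (conj' ((wA α j).eval z) * (wA α j).eval z) := by
  have htne : (if α j = 0 then (1:ℂ) else conj' (α j) * α j) ≠ 0 := by
    split_ifs with h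
    · exact one_ne_zero
    · refine mul_ne_zero ?_ h
      rw [conj']; exact conj_ne_zero h
  rw [factor_cmp j hz, ← mul_assoc, inv_mul_cancel₀ htne, one_mul]

lemma prodcmp_A (c : ℕ → Bool) (m : ℕ) {z : ℂ} (hz : onT z) :
    conj' ((piA α m).eval z) * (piA α m).eval z
      = (∏ j ∈ Finset.Icc 1 m,
            (if c j then 1 else (if α j = 0 then 1 else conj' (α j) * α j)))
        * (conj' ((piG α c m).eval z) * (piG α c m).eval z) := by
  rw [piA, piG, Polynomial.eval_prod, Polynomial.eval_prod]
  simp only [conj', map_prod]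
  rw [← Finset.prod_mul_distrib, ← Finset.prod_mul_distrib, ← Finset.prod_mul_distrib]
  apply Finset.prod_congr rfl
  intro j hj
  by_cases hc : c j
  · simp only [wG, hc, if_true, one_mul]
  · have h := factor_cmp (α := α) j hz
    simp only [conj'] at h
    simp only [wG, hc, Bool.false_eq_true, if_false]
    exact h

lemma prodcmp_B (c : ℕ → Bool) (m : ℕ) {z : ℂ} (hz : onT z) :
    conj' ((piB α m).eval z) * (piB α m).eval z
      = (∏ j ∈ Finset.Icc 1 m,
            (if c j then (if α j = 0 then 1 else conj' (α j) * α j)⁻¹ else 1))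
        * (conj' ((piG α c m).eval z) * (piG α c m).eval z) := by
  rw [piB, piG, Polynomial.eval_prod, Polynomial.eval_prod]
  simp only [conj', map_prod]
  rw [← Finset.prod_mul_distrib, ← Finset.prod_mul_distrib, ← Finset.prod_mul_distrib]
  apply Finset.prod_congr rfl
  intro j hj
  by_cases hc : c j
  · have h := factor_cmp' (α := α) j hz
    simp only [conj'] at h
    simp only [wG, hc, if_true]
    exact h
  · simp only [wG, hc, Bool.false_eq_true, if_false, one_mul]

lemma integrable_rat2 (hμ : CircleMeasure μ) (A B C D' : Polynomial ℂ)
    (hB : ∀ z, onT z → B.eval z ≠ 0) (hD : ∀ z, onT z → D'.eval z ≠ 0) :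
    Integrable (fun z => conj' (A.eval z / B.eval z) * (C.eval z / D'.eval z)) μ := by
  apply integrable_of_cm hμ
  · exact ((measurable_conj'.comp (A.continuous.measurable.div B.continuous.measurable)).mul
      (C.continuous.measurable.div D'.continuous.measurable)).aestronglyMeasurable
  · apply ContinuousOn.mul
    · exact continuous_conj'.comp_continuousOn
        (ContinuousOn.div A.continuous.continuousOn B.continuous.continuousOn hB)
    · exact ContinuousOn.div C.continuous.continuousOn D'.continuous.continuousOn hD

lemma orthTransfer_A (hμ : CircleMeasure μ) (hα : ∀ j, ‖α j‖ < 1)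
    {φA : ℕ → ℂ → ℂ} {pA : ℕ → Polynomial ℂ} (hA : IsORF μ (piA α) φA pA) (m : ℕ)
    (hc : c (m+1) = true) (r : Polynomial ℂ) (hr : r.natDegree ≤ m) :
    ∫ z, conj' ((pA (m+1)).eval z / (piG α c (m+1)).eval z)
      * (r.eval z / (piG α c m).eval z) ∂μ = 0 := by
  set K : ℂ := ∏ j ∈ Finset.Icc 1 m,
    (if c j then 1 else (if α j = 0 then 1 else conj' (α j) * α j)) with hK
  have hcongr : ∫ z, conj' ((pA (m+1)).eval z / (piG α c (m+1)).eval z)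
        * (r.eval z / (piG α c m).eval z) ∂μ
      = ∫ z, K * (conj' ((pA (m+1)).eval z / (piA α (m+1)).eval z)
        * (r.eval z / (piA α m).eval z)) ∂μ := by
    refine integral_congr_ae ?_
    filter_upwards [ae_onT hμ] with z hz
    have hPGm : (piG α c m).eval z ≠ 0 := piG_ne hα c m hz
    have hPAm : (piA α m).eval z ≠ 0 := piA_ne hα m hz
    have hwAz : (wA α (m+1)).eval z ≠ 0 := wA_ne hα (m+1) hz
    have hP := prodcmp_A (α := α) c m hz
    rw [← hK] at hP
    have hsplitG : (piG α c (m+1)).eval z = (piG α c m).eval z * (wA α (m+1)).eval z := by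
      rw [piG_succ α c m, Polynomial.eval_mul]
      congr 2
      simp [wG, hc]
    have hsplitA : (piA α (m+1)).eval z = (piA α m).eval z * (wA α (m+1)).eval z := by
      rw [piA_succ α m, Polynomial.eval_mul]
    rw [hsplitG, hsplitA]
    simp only [conj', map_div₀, map_mul] at hP ⊢
    rw [div_mul_div_comm, div_mul_div_comm, mul_div_assoc']
    have hden1 : (starRingEnd ℂ) ((piG α c m).eval z) * (starRingEnd ℂ) ((wA α (m+1)).eval z)
        * (piG α c m).eval z ≠ 0 :=
      mul_ne_zero (mul_ne_zero (conj_ne_zero hPGm) (conj_ne_zero hwAz)) hPGm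
    have hden2 : (starRingEnd ℂ) ((piA α m).eval z) * (starRingEnd ℂ) ((wA α (m+1)).eval z)
        * (piA α m).eval z ≠ 0 :=
      mul_ne_zero (mul_ne_zero (conj_ne_zero hPAm) (conj_ne_zero hwAz)) hPAm
    rw [div_eq_div_iff hden1 hden2]
    linear_combination ((starRingEnd ℂ) ((pA (m+1)).eval z) * r.eval z
      * (starRingEnd ℂ) ((wA α (m+1)).eval z)) * hP
  rw [hcongr, integral_const_mul, orthInt hA m r hr, mul_zero]

lemma orthTransfer_B (hμ : CircleMeasure μ) (hα : ∀ j, ‖α j‖ < 1)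
    {φB : ℕ → ℂ → ℂ} {pB : ℕ → Polynomial ℂ} (hB : IsORF μ (piB α) φB pB) (m : ℕ)
    (hc : c (m+1) = false) (r : Polynomial ℂ) (hr : r.natDegree ≤ m) :
    ∫ z, conj' ((pB (m+1)).eval z / (piG α c (m+1)).eval z)
      * (r.eval z / (piG α c m).eval z) ∂μ = 0 := by
  set K : ℂ := ∏ j ∈ Finset.Icc 1 m,
    (if c j then (if α j = 0 then 1 else conj' (α j) * α j)⁻¹ else 1) with hK
  have hcongr : ∫ z, conj' ((pB (m+1)).eval z / (piG α c (m+1)).eval z)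
        * (r.eval z / (piG α c m).eval z) ∂μ
      = ∫ z, K * (conj' ((pB (m+1)).eval z / (piB α (m+1)).eval z)
        * (r.eval z / (piB α m).eval z)) ∂μ := by
    refine integral_congr_ae ?_
    filter_upwards [ae_onT hμ] with z hz
    have hPGm : (piG α c m).eval z ≠ 0 := piG_ne hα c m hz
    have hPBm : (piB α m).eval z ≠ 0 := piB_ne hα m hz
    have hwBz : (wB α (m+1)).eval z ≠ 0 := wB_ne hα (m+1) hz
    have hP := prodcmp_B (α := α) c m hz
    rw [← hK] at hP
    have hsplitG : (piG α c (m+1)).eval z = (piG α c m).eval z * (wB α (m+1)).eval z := by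
      rw [piG_succ α c m, Polynomial.eval_mul]
      congr 2
      simp [wG, hc]
    have hsplitB : (piB α (m+1)).eval z = (piB α m).eval z * (wB α (m+1)).eval z := by
      rw [piB_succ α m, Polynomial.eval_mul]
    rw [hsplitG, hsplitB]
    simp only [conj', map_div₀, map_mul] at hP ⊢
    rw [div_mul_div_comm, div_mul_div_comm, mul_div_assoc']
    have hden1 : (starRingEnd ℂ) ((piG α c m).eval z) * (starRingEnd ℂ) ((wB α (m+1)).eval z)
        * (piG α c m).eval z ≠ 0 :=
      mul_ne_zero (mul_ne_zero (conj_ne_zero hPGm) (conj_ne_zero hwBz)) hPGm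
    have hden2 : (starRingEnd ℂ) ((piB α m).eval z) * (starRingEnd ℂ) ((wB α (m+1)).eval z)
        * (piB α m).eval z ≠ 0 :=
      mul_ne_zero (mul_ne_zero (conj_ne_zero hPBm) (conj_ne_zero hwBz)) hPBm
    rw [div_eq_div_iff hden1 hden2]
    linear_combination ((starRingEnd ℂ) ((pB (m+1)).eval z) * r.eval z
      * (starRingEnd ℂ) ((wB α (m+1)).eval z)) * hP
  rw [hcongr, integral_const_mul, orthInt hB m r hr, mul_zero]

end Transfer

section Uniqueness

open Polynomial MeasureTheory

variable {μ : MeasureTheory.Measure ℂ} {α : ℕ → ℂ} {c : ℕ → Bool}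

lemma uniqueness (hμ : CircleMeasure μ) (hα : ∀ j, ‖α j‖ < 1)
    {φG : ℕ → ℂ → ℂ} {pG : ℕ → Polynomial ℂ} (hG : IsORF μ (piG α c) φG pG) (m : ℕ)
    (pN : Polynomial ℂ) (hpN : pN ≠ 0) (hdN : pN.natDegree ≤ m + 1)
    (hNorth : ∀ r : Polynomial ℂ, r.natDegree ≤ m →
      ∫ z, conj' (pN.eval z / (piG α c (m+1)).eval z)
        * (r.eval z / (piG α c m).eval z) ∂μ = 0)
    (hcase : (∃ u ρ : ℂ, u ≠ 0 ∧ wG α c (m+1) = Polynomial.C u * (Polynomial.X - Polynomial.C ρ)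
        ∧ pN.eval ρ ≠ 0) ∨ (wG α c (m+1) = 1 ∧ pN.natDegree = m + 1)) :
    ∃ κ : ℂ, κ ≠ 0 ∧ pG (m+1) = Polynomial.C κ * pN := by
  have hPGn : ∀ z, onT z → (piG α c (m+1)).eval z ≠ 0 := fun z hz => piG_ne hα c _ hz
  have hPGm : ∀ z, onT z → (piG α c m).eval z ≠ 0 := fun z hz => piG_ne hα c _ hz
  have mfψ := moments hμ pN (piG α c (m+1)) hpN hPGn
  set SR : ℝ := ∫ z, Complex.normSq (pN.eval z / (piG α c (m+1)).eval z) ∂μ with hSRdef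
  have hSR : 0 < SR := mfψ.pos
  have hSne : ((SR:ℝ):ℂ) ≠ 0 := Complex.ofReal_ne_zero.mpr (ne_of_gt hSR)
  set T : ℂ := ∫ z, conj' (pN.eval z / (piG α c (m+1)).eval z)
    * ((pG (m+1)).eval z / (piG α c (m+1)).eval z) ∂μ with hTdef
  set κ : ℂ := T / ((SR:ℝ):ℂ) with hκdef
  set dnum : Polynomial ℂ := pG (m+1) - Polynomial.C κ * pN with hdnum
  have iT : Integrable (fun z => conj' (pN.eval z / (piG α c (m+1)).eval z)
      * ((pG (m+1)).eval z / (piG α c (m+1)).eval z)) μ :=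
    integrable_rat2 hμ _ _ _ _ hPGn hPGn
  have iS : Integrable (fun z => conj' (pN.eval z / (piG α c (m+1)).eval z)
      * (pN.eval z / (piG α c (m+1)).eval z)) μ :=
    integrable_rat2 hμ _ _ _ _ hPGn hPGn
  have hSval : ∫ z, conj' (pN.eval z / (piG α c (m+1)).eval z)
      * (pN.eval z / (piG α c (m+1)).eval z) ∂μ = ((SR:ℝ):ℂ) := by
    have hfe : (fun z => conj' (pN.eval z / (piG α c (m+1)).eval z)
        * (pN.eval z / (piG α c (m+1)).eval z))
        = fun z => ((Complex.normSq (pN.eval z / (piG α c (m+1)).eval z) : ℝ) : ℂ) :=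
      funext fun z => conj'_mul_self _
    rw [hfe]
    exact mfψ.hm0
  have hperp : ∫ z, conj' (pN.eval z / (piG α c (m+1)).eval z)
      * (dnum.eval z / (piG α c (m+1)).eval z) ∂μ = 0 := by
    have hfe : ∀ z : ℂ, conj' (pN.eval z / (piG α c (m+1)).eval z)
        * (dnum.eval z / (piG α c (m+1)).eval z)
        = conj' (pN.eval z / (piG α c (m+1)).eval z)
            * ((pG (m+1)).eval z / (piG α c (m+1)).eval z)
          - κ * (conj' (pN.eval z / (piG α c (m+1)).eval z)
            * (pN.eval z / (piG α c (m+1)).eval z)) := by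
      intro z
      rw [hdnum]
      simp only [Polynomial.eval_sub, Polynomial.eval_mul, Polynomial.eval_C]
      ring
    simp only [hfe]
    rw [integral_sub iT (iS.const_mul κ), integral_const_mul, hSval, ← hTdef, hκdef]
    field_simp
    ring
  have hdeg_d : dnum.natDegree ≤ m + 1 := by
    rw [hdnum]
    refine le_trans (Polynomial.natDegree_sub_le _ _) (max_le (hG.deg (m+1)) ?_)
    exact le_trans (Polynomial.natDegree_mul_le) (by simp [Polynomial.natDegree_C, hdN])
  obtain ⟨r, cc, hrdeg, hdecomp⟩ := span_lemma (by omega : 1 ≤ m + 1) hdN hdeg_d hcase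
  have hrdeg' : r.natDegree ≤ m := by omega
  have hGorth := orthInt hG m r hrdeg'
  have hNorth_r := hNorth r hrdeg'
  have iδr : Integrable (fun z => conj' (dnum.eval z / (piG α c (m+1)).eval z)
      * (r.eval z / (piG α c m).eval z)) μ := integrable_rat2 hμ _ _ _ _ hPGn hPGm
  have iδψ : Integrable (fun z => conj' (dnum.eval z / (piG α c (m+1)).eval z)
      * (pN.eval z / (piG α c (m+1)).eval z)) μ := integrable_rat2 hμ _ _ _ _ hPGn hPGn
  have i1 : Integrable (fun z => conj' ((pG (m+1)).eval z / (piG α c (m+1)).eval z)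
      * (r.eval z / (piG α c m).eval z)) μ := integrable_rat2 hμ _ _ _ _ hPGn hPGm
  have i2 : Integrable (fun z => conj' (pN.eval z / (piG α c (m+1)).eval z)
      * (r.eval z / (piG α c m).eval z)) μ := integrable_rat2 hμ _ _ _ _ hPGn hPGm
  have hconjperp : ∫ z, conj' (dnum.eval z / (piG α c (m+1)).eval z)
      * (pN.eval z / (piG α c (m+1)).eval z) ∂μ = 0 := by
    have hfe : (fun z => conj' (dnum.eval z / (piG α c (m+1)).eval z)
        * (pN.eval z / (piG α c (m+1)).eval z))
        = fun z => (starRingEnd ℂ) (conj' (pN.eval z / (piG α c (m+1)).eval z)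
            * (dnum.eval z / (piG α c (m+1)).eval z)) := by
      funext z
      simp only [conj', map_mul, Complex.conj_conj]
      ring
    rw [hfe, integral_conj, hperp, map_zero]
  have hδr : ∫ z, conj' (dnum.eval z / (piG α c (m+1)).eval z)
      * (r.eval z / (piG α c m).eval z) ∂μ = 0 := by
    have hfe : ∀ z : ℂ, conj' (dnum.eval z / (piG α c (m+1)).eval z)
        * (r.eval z / (piG α c m).eval z)
        = conj' ((pG (m+1)).eval z / (piG α c (m+1)).eval z) * (r.eval z / (piG α c m).eval z)
          - conj' κ * (conj' (pN.eval z / (piG α c (m+1)).eval z)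
            * (r.eval z / (piG α c m).eval z)) := by
      intro z
      rw [hdnum]
      simp only [Polynomial.eval_sub, Polynomial.eval_mul, Polynomial.eval_C, conj',
        map_sub, map_mul, map_div₀]
      ring
    simp only [hfe]
    rw [integral_sub i1 (i2.const_mul _), integral_const_mul, hGorth, hNorth_r,
      mul_zero, sub_zero]
  have hδδ : ∫ z, conj' (dnum.eval z / (piG α c (m+1)).eval z)
      * (dnum.eval z / (piG α c (m+1)).eval z) ∂μ = 0 := by
    have hcongr : ∫ z, conj' (dnum.eval z / (piG α c (m+1)).eval z)
          * (dnum.eval z / (piG α c (m+1)).eval z) ∂μ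
        = ∫ z, (conj' (dnum.eval z / (piG α c (m+1)).eval z) * (r.eval z / (piG α c m).eval z)
          + cc * (conj' (dnum.eval z / (piG α c (m+1)).eval z)
            * (pN.eval z / (piG α c (m+1)).eval z))) ∂μ := by
      refine integral_congr_ae ?_
      filter_upwards [ae_onT hμ] with z hz
      have hwz : (wG α c (m+1)).eval z ≠ 0 := wG_ne hα c _ hz
      have hm : (piG α c m).eval z ≠ 0 := hPGm z hz
      have h1 : (piG α c (m+1)).eval z = (piG α c m).eval z * (wG α c (m+1)).eval z := by
        rw [piG_succ α c m, Polynomial.eval_mul]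
      have h2 : dnum.eval z = r.eval z * (wG α c (m+1)).eval z + cc * pN.eval z := by
        rw [hdecomp]
        simp [Polynomial.eval_add, Polynomial.eval_mul, Polynomial.eval_C]
      have h3 : dnum.eval z / (piG α c (m+1)).eval z
          = r.eval z / (piG α c m).eval z
            + cc * (pN.eval z / (piG α c (m+1)).eval z) := by
        rw [h1, h2]
        field_simp
      calc conj' (dnum.eval z / (piG α c (m+1)).eval z)
            * (dnum.eval z / (piG α c (m+1)).eval z)
          = conj' (dnum.eval z / (piG α c (m+1)).eval z)
            * (r.eval z / (piG α c m).eval z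
              + cc * (pN.eval z / (piG α c (m+1)).eval z)) := by rw [← h3]
        _ = conj' (dnum.eval z / (piG α c (m+1)).eval z) * (r.eval z / (piG α c m).eval z)
          + cc * (conj' (dnum.eval z / (piG α c (m+1)).eval z)
            * (pN.eval z / (piG α c (m+1)).eval z)) := by ring
    rw [hcongr, integral_add iδr (iδψ.const_mul cc), hδr, integral_const_mul, hconjperp,
      mul_zero, add_zero]
  rcases eq_or_ne dnum 0 with hd0 | hd0
  · have hκeq : pG (m+1) = Polynomial.C κ * pN := by
      have := sub_eq_zero.mp hd0
      exact this
    refine ⟨κ, ?_, hκeq⟩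
    intro h0
    rw [h0, Polynomial.C_0, zero_mul] at hκeq
    exact p_ne_zero hG (m+1) hκeq
  · exfalso
    have mfδ := moments hμ dnum (piG α c (m+1)) hd0 hPGn
    have hfe : (fun z => conj' (dnum.eval z / (piG α c (m+1)).eval z)
        * (dnum.eval z / (piG α c (m+1)).eval z))
        = fun z => ((Complex.normSq (dnum.eval z / (piG α c (m+1)).eval z) : ℝ) : ℂ) :=
      funext fun z => conj'_mul_self _
    rw [hfe, mfδ.hm0] at hδδ
    exact absurd (Complex.ofReal_eq_zero.mp hδδ) (ne_of_gt mfδ.pos)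

end Uniqueness

end ORF

open ORF MeasureTheory

/-- Corollary `cor1`: the zeros of φ_n^α lie in 𝔻 and those of φ_n^{α*}
in 𝔼; the zeros of φ_n^β lie in 𝔼 and those of φ_n^{β*} in 𝔻; moreover the zeros of φ_n
coincide with those of φ_n^α (hence lie in 𝔻) when γ_n = α_n, and with those of φ_n^β
(hence lie in 𝔼) when γ_n = β_n. (The zeros of a rational function are those of its
numerator polynomial.) -/
theorem stmt6 (α : ℕ → ℂ) (hα0 : α 0 = 0) (hα : ∀ j, ‖α j‖ < 1)
    (c : ℕ → Bool) (μ : Measure ℂ) (hμ : CircleMeasure μ)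
    (φA φB φG : ℕ → ℂ → ℂ) (pA pB pG : ℕ → Polynomial ℂ)
    (hA : IsORF μ (piA α) φA pA) (hB : IsORF μ (piB α) φB pB)
    (hG : IsORF μ (piG α c) φG pG)
    (hnA : ∀ n, normA α pA n) (hnB : ∀ n, normB α pB n) (hnG : ∀ n, normG α c pG n)
    (n : ℕ) :
    (∀ z, (pA n).eval z = 0 → ‖z‖ < 1) ∧
    (∀ z, (pstar n (pA n)).eval z = 0 → 1 < ‖z‖) ∧
    (∀ z, (pB n).eval z = 0 → 1 < ‖z‖) ∧
    (∀ z, (pstar n (pB n)).eval z = 0 → ‖z‖ < 1) ∧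
    (c n = true →
      (∀ z, ((pG n).eval z = 0 ↔ (pA n).eval z = 0)) ∧
      (∀ z, (pG n).eval z = 0 → ‖z‖ < 1)) ∧
    (c n = false →
      (∀ z, ((pG n).eval z = 0 ↔ (pB n).eval z = 0)) ∧
      (∀ z, (pG n).eval z = 0 → 1 < ‖z‖)) := by
  classical
  have hzA := zerosA hμ hα hA n
  have hzB := zerosB hμ hα hB n
  refine ⟨hzA.1, ?_, hzB, ?_, ?_, ?_⟩
  · exact pstar_zeros_gt (p_ne_zero hA n) hzA.2 hzA.1
  · exact pstar_zeros_lt (hB.deg n) hzB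
  · intro hc
    cases n with
    | zero =>
      constructor
      · intro z
        rw [hG.p0, hA.p0]
      · intro z h
        rw [hG.p0] at h
        simp at h
    | succ m =>
      have hzg := zerosG_true hμ hα hG m hc
      have hN := orthTransfer_A hμ hα hA m hc
      have hcase : (∃ u ρ : ℂ, u ≠ 0 ∧
          wG α c (m+1) = Polynomial.C u * (Polynomial.X - Polynomial.C ρ) ∧
          (pA (m+1)).eval ρ ≠ 0) ∨ (wG α c (m+1) = 1 ∧ (pA (m+1)).natDegree = m + 1) := by
        by_cases h0 : α (m+1) = 0
        · right
          refine ⟨?_, (zerosA hμ hα hA (m+1)).2⟩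
          simp [wG, hc, wA, h0, conj']
        · left
          have hca : conj' (α (m+1)) ≠ 0 := by rw [conj']; exact conj_ne_zero h0
          refine ⟨-conj' (α (m+1)), (conj' (α (m+1)))⁻¹, neg_ne_zero.mpr hca, ?_, ?_⟩
          · simp only [wG, hc, if_true, wA]
            rw [mul_sub, ← Polynomial.C_mul,
              show (-conj' (α (m+1))) * (conj' (α (m+1)))⁻¹ = -1 by field_simp]
            simp only [map_neg, Polynomial.C_1]
            ring
          · intro hzero
            have hlt := (zerosA hμ hα hA (m+1)).1 _ hzero
            rw [norm_inv, abs_conj'] at hlt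
            have hpos : 0 < ‖α (m+1)‖ := norm_pos_iff.mpr h0
            nlinarith [hα (m+1), mul_inv_cancel₀ (ne_of_gt hpos)]
      obtain ⟨κ, hκ0, hκ⟩ := uniqueness hμ hα hG m (pA (m+1)) (p_ne_zero hA (m+1))
        (hA.deg (m+1)) hN hcase
      constructor
      · intro z
        rw [hκ, Polynomial.eval_mul, Polynomial.eval_C]
        constructor
        · intro h
          rcases mul_eq_zero.mp h with h|h
          · exact absurd h hκ0
          · exact h
        · intro h
          rw [h, mul_zero]
      · exact hzg.1
  · intro hc
    cases n with
    | zero =>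
      constructor
      · intro z
        rw [hG.p0, hB.p0]
      · intro z h
        rw [hG.p0] at h
        simp at h
    | succ m =>
      have hzg := zerosG_false hμ hα hG m hc
      have hN := orthTransfer_B hμ hα hB m hc
      have hcase : (∃ u ρ : ℂ, u ≠ 0 ∧
          wG α c (m+1) = Polynomial.C u * (Polynomial.X - Polynomial.C ρ) ∧
          (pB (m+1)).eval ρ ≠ 0) ∨ (wG α c (m+1) = 1 ∧ (pB (m+1)).natDegree = m + 1) := by
        left
        by_cases h0 : α (m+1) = 0
        · refine ⟨-1, 0, by norm_num, ?_, ?_⟩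
          · simp only [wG, hc, Bool.false_eq_true, if_false, wB, h0, if_true]
            simp
          · intro hzero
            have := zerosB hμ hα hB (m+1) 0 hzero
            simp at this
            linarith
        · refine ⟨-(α (m+1))⁻¹, α (m+1), by simp [h0], ?_, ?_⟩
          · simp only [wG, hc, Bool.false_eq_true, if_false, wB, h0, if_false]
            rw [mul_sub, ← Polynomial.C_mul,
              show (-(α (m+1))⁻¹) * (α (m+1)) = -1 by field_simp]
            simp only [map_neg, Polynomial.C_1]
            ring
          · intro hzero
            have := zerosB hμ hα hB (m+1) _ hzero
            exact absurd this (not_lt.mpr (hα (m+1)).le)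
      obtain ⟨κ, hκ0, hκ⟩ := uniqueness hμ hα hG m (pB (m+1)) (p_ne_zero hB (m+1))
        (hB.deg (m+1)) hN hcase
      constructor
      · intro z
        rw [hκ, Polynomial.eval_mul, Polynomial.eval_C]
        constructor
        · intro h
          rcases mul_eq_zero.mp h with h|h
          · exact absurd h hκ0
          · exact h
        · intro h
          rw [h, mul_zero]
      · exact hzg
end
end

section
/- Let C_n(z, w) be the numerator of the kernel for the sequence γ, i.e., k_n(z, w) = C_n(z, w)/(π_n(z)·conj(π_n(w))). Then for all n ≥ 0 one has C_n(z, γ_n) = p_n^*(z)·conj(p_n^*(γ_n)) for all z ∈ ℂ, and C_n(γ_n, γ_n) = |p_n^*(γ_n)|², where, when γ_n = ∞, evaluation of a polynomial of degree ≤ n at γ_n means taking its coefficient of z^n. -/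
noncomputable section
open MeasureTheory
open scoped Classical

namespace ORFAux
open ORF Polynomial

variable {α : ℕ → ℂ} {c : ℕ → Bool}

lemma conj'_conj' (z : ℂ) : conj' (conj' z) = z := Complex.conj_conj z

lemma onT_ne_zero {z : ℂ} (hz : onT z) : z ≠ 0 := by
  intro h; rw [h] at hz; simp [onT] at hz

lemma onT_mul_conj {z : ℂ} (hz : onT z) : z * conj' z = 1 := by
  have := Complex.mul_conj z
  rw [conj', this]
  have : Complex.normSq z = 1 := by
    rw [← Complex.sq_norm, hz]; norm_num
  rw [this]; norm_num

lemma eval_wA_ne {j : ℕ} (hαj : ‖α j‖ < 1) {z : ℂ} (hz : onT z) :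
    (wA α j).eval z ≠ 0 := by
  simp only [wA, eval_sub, eval_one, eval_mul, eval_C, eval_X]
  intro h
  have h1 : conj' (α j) * z = 1 := by linear_combination -h
  have := congrArg (‖·‖) h1
  rw [norm_mul] at this
  have hz' : ‖z‖ = 1 := hz
  simp [conj', hz'] at this
  rw [this] at hαj; simp at hαj

lemma eval_wB_ne {j : ℕ} (hαj : ‖α j‖ < 1) {z : ℂ} (hz : onT z) :
    (wB α j).eval z ≠ 0 := by
  rw [wB]
  split_ifs with h
  · simpa using onT_ne_zero hz
  · simp only [eval_sub, eval_one, eval_mul, eval_C, eval_X]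
    intro hh
    have h1 : (α j)⁻¹ * z = 1 := by linear_combination -hh
    have := congrArg (‖·‖) h1
    rw [norm_mul, norm_inv] at this
    rw [hz, mul_one, norm_one] at this
    have : ‖α j‖ = 1 := by
      field_simp at this
      simpa using this.symm
    rw [this] at hαj; simp at hαj

lemma eval_wG_ne (hα : ∀ j, ‖α j‖ < 1) (j : ℕ) {z : ℂ} (hz : onT z) :
    (wG α c j).eval z ≠ 0 := by
  rw [wG]; split_ifs
  · exact eval_wA_ne (hα j) hz
  · exact eval_wB_ne (hα j) hz

lemma wG_ne_zero (hα : ∀ j, ‖α j‖ < 1) (j : ℕ) : wG α c j ≠ 0 := by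
  intro h
  have : (wG α c j).eval 1 ≠ 0 := eval_wG_ne hα j (by simp [onT])
  rw [h] at this; simp at this

lemma tailProd_eval_ne (hα : ∀ j, ‖α j‖ < 1) {n k : ℕ} {z : ℂ} (hz : onT z) :
    (tailProd α c n k).eval z ≠ 0 := by
  rw [tailProd, eval_prod]
  exact Finset.prod_ne_zero_iff.2 fun j _ => eval_wG_ne hα j hz

lemma piG_eval_ne (hα : ∀ j, ‖α j‖ < 1) {n : ℕ} {z : ℂ} (hz : onT z) :
    (piG α c n).eval z ≠ 0 := by
  rw [piG, eval_prod]
  exact Finset.prod_ne_zero_iff.2 fun j _ => eval_wG_ne hα j hz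

lemma piG_factor {n k : ℕ} (h : k ≤ n) :
    piG α c n = piG α c k * tailProd α c n k := by
  rw [piG, piG, tailProd, show (1:ℕ) = 0 + 1 from rfl, Finset.Icc_add_one_left_eq_Ioc, Finset.Icc_add_one_left_eq_Ioc,
    zero_add, Finset.Icc_add_one_left_eq_Ioc]
  exact (Finset.prod_Ioc_consecutive _ (Nat.zero_le k) h).symm

lemma tail_factor {n m k : ℕ} (h1 : k ≤ m) (h2 : m ≤ n) :
    tailProd α c n k = tailProd α c m k * tailProd α c n m := by
  rw [tailProd, tailProd, tailProd, Finset.Icc_add_one_left_eq_Ioc, Finset.Icc_add_one_left_eq_Ioc, Finset.Icc_add_one_left_eq_Ioc]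
  exact (Finset.prod_Ioc_consecutive _ h1 h2).symm

lemma tail_self {n : ℕ} : tailProd α c n n = 1 := by
  simp [tailProd]

lemma tail_single {n : ℕ} (hn : 1 ≤ n) : tailProd α c n (n-1) = wG α c n := by
  rw [tailProd]
  have : n - 1 + 1 = n := Nat.succ_pred_eq_of_pos hn
  rw [this, Finset.Icc_self, Finset.prod_singleton]

lemma tail_single' {m : ℕ} : tailProd α c (m + 1) m = wG α c (m + 1) := by
  rw [tailProd, Finset.Icc_self, Finset.prod_singleton]

lemma wG_natDegree (j : ℕ) : (wG α c j).natDegree ≤ 1 := by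
  rw [wG, wA, wB]
  split_ifs with h h2
  · refine le_trans (natDegree_sub_le _ _) ?_
    simp [natDegree_C_mul_le]
    exact le_trans (natDegree_mul_le) (by simp)
  · simp
  · refine le_trans (natDegree_sub_le _ _) ?_
    simp
    exact le_trans (natDegree_mul_le) (by simp)

lemma tailProd_natDegree {n k : ℕ} : (tailProd α c n k).natDegree ≤ n - k := by
  refine le_trans (natDegree_prod_le _ _) ?_
  refine le_trans (Finset.sum_le_card_nsmul _ _ 1 fun j _ => wG_natDegree j) ?_
  simp [Nat.card_Icc]

lemma pstar_natDegree (m : ℕ) (q : Polynomial ℂ) : (pstar m q).natDegree ≤ m := by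
  refine natDegree_sum_le_of_forall_le _ _ fun k hk => ?_
  exact le_trans (natDegree_C_mul_le _ _) (by simp)

lemma pstar_eval_onT {m : ℕ} {q : Polynomial ℂ} (hq : q.natDegree ≤ m) {z : ℂ} (hz : onT z) :
    (pstar m q).eval z = z ^ m * conj' (q.eval z) := by
  have hzz := onT_mul_conj hz
  rw [eval_eq_sum_range' (Nat.lt_succ_of_le hq), pstar, eval_finset_sum]
  rw [conj']
  rw [map_sum, Finset.mul_sum]
  refine Finset.sum_congr rfl fun k hk => ?_
  rw [Finset.mem_range, Nat.lt_succ_iff] at hk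
  simp only [eval_mul, eval_C, eval_pow, eval_X, map_mul, map_pow]
  have hzk : z ^ (m - k) = z ^ m * (starRingEnd ℂ) z ^ k := by
    have : z ^ (m - k) * (z * conj' z) ^ k = z ^ m * (conj' z) ^ k := by
      rw [mul_pow, ← mul_assoc, ← pow_add, Nat.sub_add_cancel hk]
    rw [hzz, one_pow, mul_one] at this
    exact this
  rw [hzk, conj']; ring

section Meas

variable {μ : Measure ℂ}

lemma ae_onT (hμ : CircleMeasure μ) : ∀ᵐ z ∂μ, onT z :=
  MeasureTheory.ae_iff.2 hμ.circ

lemma onT_iff_sphere {z : ℂ} : onT z ↔ z ∈ Metric.sphere (0:ℂ) 1 := by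
  rw [mem_sphere_zero_iff_norm, onT]

/-- the integrand of the sesquilinear form on numerator polynomials -/
def ratio (q r P : Polynomial ℂ) : ℂ → ℂ :=
  fun z => conj' (q.eval z / P.eval z) * (r.eval z / P.eval z)

lemma meas_ratio (q r P : Polynomial ℂ) : Measurable (ratio q r P) := by
  have h1 : Measurable fun z : ℂ => q.eval z / P.eval z := by
    simp only [div_eq_mul_inv]
    exact q.continuous.measurable.mul P.continuous.measurable.inv
  have h2 : Measurable fun z : ℂ => r.eval z / P.eval z := by
    simp only [div_eq_mul_inv]
    exact r.continuous.measurable.mul P.continuous.measurable.inv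
  exact (Complex.continuous_conj.measurable.comp h1).mul h2

lemma integrable_ratio (hμ : CircleMeasure μ) {P : Polynomial ℂ}
    (hP : ∀ z, onT z → P.eval z ≠ 0) (q r : Polynomial ℂ) :
    Integrable (ratio q r P) μ := by
  haveI := hμ.prob
  have hd1 : ContinuousOn (fun z : ℂ => q.eval z / P.eval z) (Metric.sphere (0:ℂ) 1) :=
    ContinuousOn.div q.continuous.continuousOn P.continuous.continuousOn
      (fun z hz => hP z (onT_iff_sphere.2 hz))
  have hd2 : ContinuousOn (fun z : ℂ => r.eval z / P.eval z) (Metric.sphere (0:ℂ) 1) :=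
    ContinuousOn.div r.continuous.continuousOn P.continuous.continuousOn
      (fun z hz => hP z (onT_iff_sphere.2 hz))
  have hcont : ContinuousOn (ratio q r P) (Metric.sphere (0:ℂ) 1) :=
    (Complex.continuous_conj.comp_continuousOn hd1).mul hd2
  obtain ⟨C, hC⟩ := (isCompact_sphere (0:ℂ) 1).exists_bound_of_continuousOn hcont
  refine Integrable.mono' (integrable_const C) (meas_ratio q r P).aestronglyMeasurable ?_
  filter_upwards [ae_onT hμ] with z hz
  exact hC z (onT_iff_sphere.1 hz)

/-- the sesquilinear form on numerator polynomials -/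
def Jf (μ : Measure ℂ) (P q r : Polynomial ℂ) : ℂ := ∫ z, ratio q r P z ∂μ

lemma Jf_conj (P q r : Polynomial ℂ) : Jf μ P q r = conj' (Jf μ P r q) := by
  rw [Jf, Jf, conj', ← integral_conj]
  congr 1; funext z
  rw [ratio, ratio]
  simp only [conj', map_mul, Complex.conj_conj]
  ring

lemma Jf_add (hμ : CircleMeasure μ) {P : Polynomial ℂ}
    (hP : ∀ z, onT z → P.eval z ≠ 0) (q r s : Polynomial ℂ) :
    Jf μ P q (r + s) = Jf μ P q r + Jf μ P q s := by
  rw [Jf, Jf, Jf, ← integral_add (integrable_ratio hμ hP q r) (integrable_ratio hμ hP q s)]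
  congr 1; funext z
  rw [ratio, ratio, ratio, Polynomial.eval_add, add_div, mul_add]

lemma Jf_Cmul (P q r : Polynomial ℂ) (a : ℂ) :
    Jf μ P q (Polynomial.C a * r) = a * Jf μ P q r := by
  rw [Jf, Jf]
  calc (∫ z, ratio q (Polynomial.C a * r) P z ∂μ) = ∫ z, a • ratio q r P z ∂μ := by
        congr 1; funext z
        rw [ratio, ratio, Polynomial.eval_mul, Polynomial.eval_C, smul_eq_mul]
        ring
    _ = a • ∫ z, ratio q r P z ∂μ := integral_smul a _
    _ = a * ∫ z, ratio q r P z ∂μ := by rw [smul_eq_mul]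

lemma Jf_sum (hμ : CircleMeasure μ) {P : Polynomial ℂ}
    (hP : ∀ z, onT z → P.eval z ≠ 0) (q : Polynomial ℂ) {ι : Type*} (s : Finset ι)
    (F : ι → Polynomial ℂ) :
    Jf μ P q (∑ i ∈ s, F i) = ∑ i ∈ s, Jf μ P q (F i) := by
  simp only [Jf]
  rw [← integral_finset_sum s (fun i _ => integrable_ratio hμ hP q (F i))]
  congr 1; funext z
  rw [ratio, Polynomial.eval_finset_sum, Finset.sum_div, Finset.mul_sum]
  rfl

end Meas

section ORFpart

variable {μ : Measure ℂ} {φ : ℕ → ℂ → ℂ} {p : ℕ → Polynomial ℂ}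

lemma tailProd_ne_zero (hα : ∀ j, ‖α j‖ < 1) {n k : ℕ} :
    tailProd α c n k ≠ 0 := by
  rw [tailProd]
  exact Finset.prod_ne_zero_iff.2 fun j _ => wG_ne_zero hα j

lemma v_natDegree (hφ : IsORF μ (piG α c) φ p) {n k : ℕ} (hk : k ≤ n) :
    (p k * tailProd α c n k).natDegree ≤ n := by
  refine le_trans (natDegree_mul_le) ?_
  have h1 := hφ.deg k
  have h2 : (tailProd α c n k).natDegree ≤ n - k := tailProd_natDegree
  omega

lemma G_eq_phi (hφ : IsORF μ (piG α c) φ p) (hα : ∀ j, ‖α j‖ < 1)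
    {n k : ℕ} (hk : k ≤ n) {z : ℂ} (hz : onT z) :
    (p k * tailProd α c n k).eval z / (piG α c n).eval z = φ k z := by
  rw [hφ.rep k z, piG_factor hk, eval_mul, eval_mul]
  rw [mul_div_mul_right _ _ (tailProd_eval_ne hα hz)]

lemma phi_mem_Lsp (hφ : IsORF μ (piG α c) φ p) (hα : ∀ j, ‖α j‖ < 1)
    {k l : ℕ} (hkl : k ≤ l) : φ k ∈ Lsp (piG α c) l :=
  ⟨p k * tailProd α c l k, v_natDegree hφ hkl, fun z hz => (G_eq_phi hφ hα hkl hz).symm⟩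

lemma inn_phi_zero (hφ : IsORF μ (piG α c) φ p) (hα : ∀ j, ‖α j‖ < 1)
    {k l : ℕ} (hkl : k < l) : inn μ (φ l) (φ k) = 0 :=
  hφ.orth l (le_trans (Nat.succ_le_succ (Nat.zero_le _)) hkl) _
    (phi_mem_Lsp hφ hα (by omega : k ≤ l - 1))

lemma inn_conj (f g : ℂ → ℂ) : inn μ f g = conj' (inn μ g f) := by
  rw [inn, inn, conj', ← integral_conj]
  congr 1; funext z
  simp only [conj', map_mul, Complex.conj_conj]
  ring

lemma Jf_phi (hμ : CircleMeasure μ) (hα : ∀ j, ‖α j‖ < 1)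
    (hφ : IsORF μ (piG α c) φ p) {n k l : ℕ} (hk : k ≤ n) (hl : l ≤ n) :
    Jf μ (piG α c n) (p k * tailProd α c n k) (p l * tailProd α c n l)
      = if k = l then 1 else 0 := by
  have heq : Jf μ (piG α c n) (p k * tailProd α c n k) (p l * tailProd α c n l)
      = inn μ (φ k) (φ l) := by
    rw [Jf, inn]
    refine integral_congr_ae ?_
    filter_upwards [ae_onT hμ] with z hz
    rw [ratio, G_eq_phi hφ hα hk hz, G_eq_phi hφ hα hl hz]
  rw [heq]
  rcases lt_trichotomy k l with h|h|h
  · rw [if_neg h.ne, inn_conj, inn_phi_zero hφ hα h]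
    simp [conj']
  · rw [if_pos h, h]; exact hφ.norm l
  · rw [if_neg h.ne', inn_phi_zero hφ hα h]

lemma indep_aux (hα : ∀ j, ‖α j‖ < 1) (hφ : IsORF μ (piG α c) φ p)
    {n : ℕ} (m : ℕ) (hm : m ≤ n) (g : ℕ → ℂ)
    (hsum : ∑ k ∈ Finset.range (m + 1), g k • (p k * tailProd α c n k) = 0) :
    ∀ k, k ≤ m → g k = 0 := by
  induction m with
  | zero =>
    intro k hk
    interval_cases k
    rw [Finset.sum_range_one, hφ.p0, one_mul] at hsum
    exact (smul_eq_zero.1 hsum).resolve_right (tailProd_ne_zero hα)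
  | succ m ih =>
    have hgm : g (m + 1) = 0 := by
      by_contra hg
      apply hφ.notmem (m + 1) (Nat.le_add_left 1 m)
      have hmm : m + 1 - 1 = m := by omega
      rw [hmm]
      refine ⟨∑ k ∈ Finset.range (m + 1), (-(g k / g (m + 1))) • (p k * tailProd α c m k),
        ?_, ?_⟩
      · refine natDegree_sum_le_of_forall_le _ _ fun k hk => ?_
        rw [Finset.mem_range, Nat.lt_succ_iff] at hk
        exact le_trans (natDegree_smul_le _ _) (v_natDegree hφ hk)
      · intro z hz
        have hev := congrArg (eval z) hsum
        simp only [eval_finset_sum, eval_smul, smul_eq_mul, eval_zero] at hev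
        rw [Finset.sum_range_succ] at hev
        have hT : (tailProd α c n (m + 1)).eval z ≠ 0 := tailProd_eval_ne hα hz
        have hπm : (piG α c m).eval z ≠ 0 := piG_eval_ne hα hz
        have hw : (wG α c (m + 1)).eval z ≠ 0 := eval_wG_ne hα _ hz
        set W := (wG α c (m + 1)).eval z with hW
        set T := (tailProd α c n (m + 1)).eval z with hTdef
        set S := ∑ k ∈ Finset.range (m + 1), g k * (p k * tailProd α c m k).eval z with hS
        set q := ∑ k ∈ Finset.range (m + 1),
          (-(g k / g (m + 1))) • (p k * tailProd α c m k) with hqdef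
        have htail1 : tailProd α c n m = wG α c (m + 1) * tailProd α c n (m + 1) := by
          rw [tail_factor (Nat.le_succ m) hm, tail_single']
        have e1 : ∀ k ∈ Finset.range (m + 1),
            g k * (p k * tailProd α c n k).eval z
              = g k * (p k * tailProd α c m k).eval z * (W * T) := by
          intro k hk
          rw [Finset.mem_range, Nat.lt_succ_iff] at hk
          rw [tail_factor hk (le_trans (Nat.le_succ m) hm), htail1]
          simp only [eval_mul]
          ring
        have h4 : S * (W * T) + g (m + 1) * ((p (m + 1)).eval z * T) = 0 := by
          have hSS : S * (W * T)
              = ∑ x ∈ Finset.range (m + 1), g x * (p x * tailProd α c n x).eval z := by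
            rw [hS, Finset.sum_mul]
            exact (Finset.sum_congr rfl e1).symm
          rw [hSS]
          rw [eval_mul] at hev
          exact hev
        have h3 : q.eval z * g (m + 1) + S = 0 := by
          rw [hqdef, eval_finset_sum, Finset.sum_mul, hS]
          rw [← Finset.sum_add_distrib]
          refine Finset.sum_eq_zero fun k hk => ?_
          rw [eval_smul, smul_eq_mul]
          field_simp
          ring
        have key : (p (m + 1)).eval z = q.eval z * W := by
          apply mul_right_cancel₀ (mul_ne_zero hg hT)
          linear_combination h4 - W * T * h3
        rw [hφ.rep (m + 1) z, piG_factor (Nat.le_succ m), tail_single',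
          eval_mul, div_eq_div_iff (mul_ne_zero hπm hw) hπm, key]
        ring
    intro k hk
    rcases Nat.lt_succ_iff_lt_or_eq.1 (Nat.lt_succ_of_le hk) with h | h
    · rw [Finset.sum_range_succ, hgm, zero_smul, add_zero] at hsum
      exact ih (le_trans (Nat.le_succ m) hm) hsum k (Nat.lt_succ_iff.1 h)
    · rw [h]; exact hgm

lemma rep_exists (hα : ∀ j, ‖α j‖ < 1) (hφ : IsORF μ (piG α c) φ p)
    {n : ℕ} (q : Polynomial ℂ) (hq : q.natDegree ≤ n) :
    ∃ a : ℕ → ℂ, q = ∑ k ∈ Finset.range (n + 1), a k • (p k * tailProd α c n k) := by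
  classical
  set V := Polynomial.degreeLT ℂ (n + 1) with hV
  have hmem : ∀ r : Polynomial ℂ, r.natDegree ≤ n → r ∈ V := by
    intro r hr
    rw [hV, Polynomial.mem_degreeLT]
    calc r.degree ≤ (r.natDegree : WithBot ℕ) := Polynomial.degree_le_natDegree
      _ < ((n + 1 : ℕ) : WithBot ℕ) := by exact_mod_cast Nat.lt_succ_of_le hr
  haveI : Module.Finite ℂ V := Module.Finite.equiv (Polynomial.degreeLTEquiv ℂ (n + 1)).symm
  have hrank : Module.finrank ℂ V = n + 1 := by
    rw [(Polynomial.degreeLTEquiv ℂ (n + 1)).finrank_eq]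
    simp
  set u : Fin (n + 1) → V := fun k =>
    ⟨p k * tailProd α c n k, hmem _ (v_natDegree hφ (Nat.lt_succ_iff.1 k.isLt))⟩ with hu
  have hind : LinearIndependent ℂ u := by
    rw [Fintype.linearIndependent_iff]
    intro g hg i
    set g' : ℕ → ℂ := fun k => if h : k < n + 1 then g ⟨k, h⟩ else 0 with hg'
    have hval2 : ∑ i : Fin (n + 1), g i • (p i.val * tailProd α c n i.val) = 0 := by
      have h := congrArg (V.subtype) hg
      simpa [map_sum, hu] using h
    have hconv : ∑ k ∈ Finset.range (n + 1), g' k • (p k * tailProd α c n k)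
        = ∑ i : Fin (n + 1), g i • (p i.val * tailProd α c n i.val) := by
      rw [← Fin.sum_univ_eq_sum_range (fun k => g' k • (p k * tailProd α c n k)) (n + 1)]
      refine Finset.sum_congr rfl fun i _ => ?_
      simp [hg', i.isLt, Fin.is_le]
    have hz := indep_aux hα hφ n le_rfl g' (by rw [hconv]; exact hval2)
    have hi := hz i.val (Nat.lt_succ_iff.1 i.isLt)
    simpa [hg', i.isLt, Fin.is_le] using hi
  have hcard : Fintype.card (Fin (n + 1)) = Module.finrank ℂ V := by simp [hrank]
  set b := basisOfLinearIndependentOfCardEqFinrank hind hcard with hb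
  have hbu : ∀ i, (b i : Polynomial ℂ) = p i.val * tailProd α c n i.val := fun i => by
    rw [hb, coe_basisOfLinearIndependentOfCardEqFinrank, hu]
  set x : V := ⟨q, hmem q hq⟩ with hx
  have hrep := b.sum_repr x
  refine ⟨fun k => if h : k < n + 1 then b.repr x ⟨k, h⟩ else 0, ?_⟩
  have hval := congrArg (V.subtype) hrep
  simp only [map_sum, _root_.map_smul, Submodule.coe_subtype, SetLike.val_smul] at hval
  rw [← Fin.sum_univ_eq_sum_range
    (fun k => (if h : k < n + 1 then b.repr x ⟨k, h⟩ else 0) • (p k * tailProd α c n k)) (n + 1)]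
  have : ∀ i : Fin (n + 1),
      (if h : (i : ℕ) < n + 1 then b.repr x ⟨i, h⟩ else 0) • (p i.val * tailProd α c n i.val)
        = b.repr x i • (b i : Polynomial ℂ) := by
    intro i
    rw [hbu i, dif_pos i.isLt]
  rw [Finset.sum_congr rfl fun i _ => this i]
  exact hval.symm

lemma key_identity (hμ : CircleMeasure μ) (hα : ∀ j, ‖α j‖ < 1)
    (hφ : IsORF μ (piG α c) φ p) {n : ℕ} (e : Polynomial ℂ → ℂ)
    (he_add : ∀ q r, e (q + r) = e q + e r)
    (he_C : ∀ a q, e (Polynomial.C a * q) = a * e q)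
    (heP : e (pstar n (p n)) ≠ 0)
    (horth : ∀ r, r.natDegree ≤ n → e r = 0 → Jf μ (piG α c n) (pstar n (p n)) r = 0)
    (hPP : Jf μ (piG α c n) (pstar n (p n)) (pstar n (p n)) = 1) :
    ∑ k ∈ Finset.range (n + 1), Polynomial.C (conj' (e (p k * tailProd α c n k)))
        * (p k * tailProd α c n k)
      = Polynomial.C (conj' (e (pstar n (p n)))) * pstar n (p n) := by
  classical
  set P := pstar n (p n) with hP
  have hπ : ∀ z, onT z → (piG α c n).eval z ≠ 0 := fun z hz => piG_eval_ne hα hz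
  obtain ⟨a, ha⟩ := rep_exists hα hφ P (pstar_natDegree n (p n))
  simp only [Polynomial.smul_eq_C_mul] at ha
  have hi : ∀ k, k ≤ n → Jf μ (piG α c n) (p k * tailProd α c n k) P = a k := by
    intro k hk
    rw [ha, Jf_sum hμ hπ]
    have hterm : ∀ l ∈ Finset.range (n + 1),
        Jf μ (piG α c n) (p k * tailProd α c n k) (Polynomial.C (a l) * (p l * tailProd α c n l))
          = a l * (if k = l then 1 else 0) := by
      intro l hl
      rw [Jf_Cmul, Jf_phi hμ hα hφ hk (Nat.lt_succ_iff.1 (Finset.mem_range.1 hl))]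
    rw [Finset.sum_congr rfl hterm]
    simp only [mul_ite, mul_one, mul_zero]
    rw [Finset.sum_ite_eq]
    simp [Nat.lt_succ_of_le hk]
  have hii : ∀ k, k ≤ n → Jf μ (piG α c n) P (p k * tailProd α c n k)
      = e (p k * tailProd α c n k) / e P := by
    intro k hk
    set lam := e (p k * tailProd α c n k) / e P with hlam
    have hrk : p k * tailProd α c n k
        = Polynomial.C lam * P + (p k * tailProd α c n k - Polynomial.C lam * P) := by abel
    have hdeg : (p k * tailProd α c n k - Polynomial.C lam * P).natDegree ≤ n :=
      le_trans (Polynomial.natDegree_sub_le _ _) (max_le (v_natDegree hφ hk)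
        (le_trans (Polynomial.natDegree_C_mul_le _ _) (pstar_natDegree n (p n))))
    have her : e (p k * tailProd α c n k - Polynomial.C lam * P) = 0 := by
      have h1 : e (Polynomial.C lam * P + (p k * tailProd α c n k - Polynomial.C lam * P))
          = lam * e P + e (p k * tailProd α c n k - Polynomial.C lam * P) := by
        rw [he_add, he_C]
      rw [← hrk] at h1
      have h2 : lam * e P = e (p k * tailProd α c n k) := by
        rw [hlam]; exact div_mul_cancel₀ _ heP
      rw [h2] at h1
      exact left_eq_add.1 h1
    calc Jf μ (piG α c n) P (p k * tailProd α c n k)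
        = Jf μ (piG α c n) P (Polynomial.C lam * P
            + (p k * tailProd α c n k - Polynomial.C lam * P)) := by rw [← hrk]
      _ = lam * Jf μ (piG α c n) P P
            + Jf μ (piG α c n) P (p k * tailProd α c n k - Polynomial.C lam * P) := by
          rw [Jf_add hμ hπ, Jf_Cmul]
      _ = lam := by rw [hPP, horth _ hdeg her]; ring
  have hiii : ∀ k, k ≤ n → a k = conj' (e (p k * tailProd α c n k) / e P) := by
    intro k hk
    rw [← hi k hk, Jf_conj, hii k hk]
  refine Eq.symm ?_
  calc Polynomial.C (conj' (e P)) * P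
      = ∑ k ∈ Finset.range (n + 1),
          Polynomial.C (conj' (e P)) * (Polynomial.C (a k) * (p k * tailProd α c n k)) := by
        rw [← Finset.mul_sum, ← ha]
    _ = ∑ k ∈ Finset.range (n + 1),
          Polynomial.C (conj' (e (p k * tailProd α c n k))) * (p k * tailProd α c n k) := by
        refine Finset.sum_congr rfl fun k hk => ?_
        have hk' : k ≤ n := Nat.lt_succ_iff.1 (Finset.mem_range.1 hk)
        rw [← mul_assoc, ← Polynomial.C_mul, hiii k hk', conj', conj', conj', ← map_mul,
          mul_comm (e P), div_mul_cancel₀ _ heP]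

lemma Jf_pstar_self (hμ : CircleMeasure μ) (hα : ∀ j, ‖α j‖ < 1)
    (hφ : IsORF μ (piG α c) φ p) {n : ℕ} :
    Jf μ (piG α c n) (pstar n (p n)) (pstar n (p n)) = 1 := by
  have heq : Jf μ (piG α c n) (pstar n (p n)) (pstar n (p n)) = inn μ (φ n) (φ n) := by
    rw [Jf, inn]
    refine integral_congr_ae ?_
    filter_upwards [ae_onT hμ] with z hz
    rw [ratio, pstar_eval_onT (hφ.deg n) hz, hφ.rep n z]
    have hzz := onT_mul_conj hz
    have hπ : (piG α c n).eval z ≠ 0 := piG_eval_ne hα hz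
    have hπc : (starRingEnd ℂ) ((piG α c n).eval z) ≠ 0 := by
      intro h
      apply hπ
      have h2 := congrArg (starRingEnd ℂ) h
      simpa using h2
    have h1 : (starRingEnd ℂ) z ^ n * z ^ n = 1 := by
      rw [← mul_pow]
      rw [show (starRingEnd ℂ) z * z = 1 from by rw [mul_comm]; exact hzz]
      exact one_pow n
    simp only [conj', map_div₀, map_mul, map_pow, Complex.conj_conj]
    rw [div_mul_div_comm, div_mul_div_comm]
    rw [div_eq_div_iff (mul_ne_zero hπc hπ) (mul_ne_zero hπc hπ)]
    linear_combination (p n).eval z * (starRingEnd ℂ) ((p n).eval z)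
      * ((starRingEnd ℂ) ((piG α c n).eval z) * (piG α c n).eval z) * h1
  rw [heq]
  exact hφ.norm n

lemma Jf_pstar_zero_of (hμ : CircleMeasure μ) (hα : ∀ j, ‖α j‖ < 1)
    (hφ : IsORF μ (piG α c) φ p) {n : ℕ} (hn : 1 ≤ n) (r qg : Polynomial ℂ)
    (hqg : qg.natDegree ≤ n - 1)
    (hfac : ∀ z, onT z → z ^ n * conj' (r.eval z) = (wG α c n).eval z * qg.eval z) :
    Jf μ (piG α c n) (pstar n (p n)) r = 0 := by
  rw [Jf_conj]
  have h0 : Jf μ (piG α c n) r (pstar n (p n)) = 0 := by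
    have heq : Jf μ (piG α c n) r (pstar n (p n))
        = inn μ (φ n) (fun z => qg.eval z / (piG α c (n - 1)).eval z) := by
      rw [Jf, inn]
      refine integral_congr_ae ?_
      filter_upwards [ae_onT hμ] with z hz
      rw [ratio, pstar_eval_onT (hφ.deg n) hz, hφ.rep n z]
      have hzz := onT_mul_conj hz
      have hπ : (piG α c n).eval z ≠ 0 := piG_eval_ne hα hz
      have hπ1 : (piG α c (n - 1)).eval z ≠ 0 := piG_eval_ne hα hz
      have hw : (wG α c n).eval z ≠ 0 := eval_wG_ne hα n hz
      have hπc : (starRingEnd ℂ) ((piG α c n).eval z) ≠ 0 := by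
        intro h
        apply hπ
        have h2 := congrArg (starRingEnd ℂ) h
        simpa using h2
      have hsplit : (piG α c n).eval z = (piG α c (n - 1)).eval z * (wG α c n).eval z := by
        rw [piG_factor (Nat.sub_le n 1), tail_single hn, eval_mul]
      have hfz := hfac z hz
      rw [conj'] at hfz
      simp only [conj', map_div₀]
      rw [div_mul_div_comm, div_mul_div_comm]
      rw [div_eq_div_iff (mul_ne_zero hπc hπ) (mul_ne_zero hπc hπ1)]
      rw [hsplit]
      linear_combination (starRingEnd ℂ) ((piG α c (n - 1)).eval z * (wG α c n).eval z)
        * (piG α c (n - 1)).eval z * (starRingEnd ℂ) ((p n).eval z) * hfz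
    rw [heq]
    exact hφ.orth n hn _ ⟨qg, hqg, fun z hz => rfl⟩
  rw [h0]
  simp [conj']

lemma Jf_zero_right (P q : Polynomial ℂ) : Jf μ P q 0 = 0 := by
  simp [Jf, ratio]

lemma mul_conj'_abs (x : ℂ) : x * conj' x = (‖x‖ : ℂ) ^ 2 := by
  rw [conj', Complex.mul_conj, ← Complex.sq_norm]
  push_cast
  ring

lemma heP_true {p : ℕ → Polynomial ℂ} (hnφ : ∀ n, normG α c p n) {n : ℕ} (hc : c n = true) :
    (pstar n (p n)).eval (α n) ≠ 0 := by
  intro h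
  have h2 := hnφ n
  rw [normG, if_pos hc, h, mul_zero, zero_div] at h2
  simp [posR] at h2

lemma heP_false_ne (hnφ : ∀ n, normG α c p n) {n : ℕ} (hc : c n = false) (ha : α n ≠ 0) :
    (pstar n (p n)).eval ((conj' (α n))⁻¹) ≠ 0 := by
  intro h
  have h2 := hnφ n
  rw [normG, if_neg (by simp [hc]), if_neg ha, h, mul_zero, zero_div] at h2
  simp [posR] at h2

lemma heP_false_zero (hnφ : ∀ n, normG α c p n) {n : ℕ} (hc : c n = false) (ha : α n = 0) :
    (pstar n (p n)).coeff n ≠ 0 := by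
  intro h
  have h2 := hnφ n
  rw [normG, if_neg (by simp [hc]), if_pos ha, h, mul_zero, zero_div] at h2
  simp [posR] at h2

lemma horth_deg_zero (hμ : CircleMeasure μ) {n : ℕ} (hn : n = 0) (r : Polynomial ℂ)
    (hr : r.natDegree ≤ n) (h0 : r.coeff 0 = 0) {q : Polynomial ℂ} :
    Jf μ (piG α c n) q r = 0 := by
  subst hn
  have hrC : r = Polynomial.C (r.coeff 0) := Polynomial.eq_C_of_natDegree_le_zero hr
  have : r = 0 := by rw [hrC, h0, map_zero]
  rw [this, Jf_zero_right]

lemma horth_true (hμ : CircleMeasure μ) (hα : ∀ j, ‖α j‖ < 1)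
    (hφ : IsORF μ (piG α c) φ p) {n : ℕ} (hc : c n = true) :
    ∀ r : Polynomial ℂ, r.natDegree ≤ n → r.eval (α n) = 0 →
      Jf μ (piG α c n) (pstar n (p n)) r = 0 := by
  intro r hr hre
  rcases Nat.eq_zero_or_pos n with h0 | hn
  · refine horth_deg_zero hμ h0 r hr ?_
    subst h0
    rw [Polynomial.eq_C_of_natDegree_le_zero hr] at hre
    simpa using hre
  · obtain ⟨s, hs⟩ := Polynomial.dvd_iff_isRoot.2 hre
    have hsdeg : s.natDegree ≤ n - 1 := by
      rcases eq_or_ne s 0 with h | h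
      · simp [h]
      · have hXC : (Polynomial.X - Polynomial.C (α n)) ≠ 0 := Polynomial.X_sub_C_ne_zero _
        have hmul := Polynomial.natDegree_mul hXC h
        rw [← hs, Polynomial.natDegree_X_sub_C] at hmul
        omega
    refine Jf_pstar_zero_of hμ hα hφ hn r (pstar (n - 1) s) (pstar_natDegree (n - 1) s) ?_
    intro z hz
    have hzz := onT_mul_conj hz
    rw [conj'] at hzz
    rw [hs, wG, if_pos hc, wA, pstar_eval_onT hsdeg hz]
    have hpow : z ^ n = z ^ (n - 1) * z := by
      conv_lhs => rw [show n = n - 1 + 1 from (Nat.succ_pred_eq_of_pos hn).symm]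
      rw [pow_succ]
    rw [hpow]
    simp only [conj', Polynomial.eval_mul, Polynomial.eval_sub, Polynomial.eval_X,
      Polynomial.eval_C, Polynomial.eval_one, map_mul, map_sub]
    linear_combination z ^ (n - 1) * (starRingEnd ℂ) (s.eval z) * hzz

lemma horth_false_ne (hμ : CircleMeasure μ) (hα : ∀ j, ‖α j‖ < 1)
    (hφ : IsORF μ (piG α c) φ p) {n : ℕ} (hc : c n = false) (han : α n ≠ 0) :
    ∀ r : Polynomial ℂ, r.natDegree ≤ n → r.eval ((conj' (α n))⁻¹) = 0 →
      Jf μ (piG α c n) (pstar n (p n)) r = 0 := by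
  intro r hr hre
  rcases Nat.eq_zero_or_pos n with h0 | hn
  · refine horth_deg_zero hμ h0 r hr ?_
    subst h0
    rw [Polynomial.eq_C_of_natDegree_le_zero hr] at hre
    simpa using hre
  · obtain ⟨s, hs⟩ := Polynomial.dvd_iff_isRoot.2 hre
    have hsdeg : s.natDegree ≤ n - 1 := by
      rcases eq_or_ne s 0 with h | h
      · simp [h]
      · have hXC : (Polynomial.X - Polynomial.C ((conj' (α n))⁻¹)) ≠ 0 :=
          Polynomial.X_sub_C_ne_zero _
        have hmul := Polynomial.natDegree_mul hXC h
        rw [← hs, Polynomial.natDegree_X_sub_C] at hmul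
        omega
    refine Jf_pstar_zero_of hμ hα hφ hn r (pstar (n - 1) s) (pstar_natDegree (n - 1) s) ?_
    intro z hz
    have hzz := onT_mul_conj hz
    rw [conj'] at hzz
    rw [hs, wG, if_neg (by simp [hc]), wB, if_neg han, pstar_eval_onT hsdeg hz]
    have hpow : z ^ n = z ^ (n - 1) * z := by
      conv_lhs => rw [show n = n - 1 + 1 from (Nat.succ_pred_eq_of_pos hn).symm]
      rw [pow_succ]
    rw [hpow]
    simp only [conj', Polynomial.eval_mul, Polynomial.eval_sub, Polynomial.eval_X,
      Polynomial.eval_C, Polynomial.eval_one, map_mul, map_sub, map_inv₀, Complex.conj_conj]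
    linear_combination z ^ (n - 1) * (starRingEnd ℂ) (s.eval z) * hzz

lemma horth_false_zero (hμ : CircleMeasure μ) (hα : ∀ j, ‖α j‖ < 1)
    (hφ : IsORF μ (piG α c) φ p) {n : ℕ} (hc : c n = false) (han : α n = 0) :
    ∀ r : Polynomial ℂ, r.natDegree ≤ n → r.coeff n = 0 →
      Jf μ (piG α c n) (pstar n (p n)) r = 0 := by
  intro r hr hre
  rcases Nat.eq_zero_or_pos n with h0 | hn
  · exact horth_deg_zero hμ h0 r hr (by rw [← h0]; exact hre)
  · have hrdeg : r.natDegree ≤ n - 1 := by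
      rcases eq_or_ne r 0 with h | h
      · simp [h]
      · have hne : r.natDegree ≠ n := by
          intro hEq
          apply Polynomial.leadingCoeff_ne_zero.2 h
          rw [Polynomial.leadingCoeff, hEq, hre]
        omega
    refine Jf_pstar_zero_of hμ hα hφ hn r (-(pstar (n - 1) r)) (by
      refine le_trans ?_ (pstar_natDegree (n - 1) r)
      rw [Polynomial.natDegree_neg]) ?_
    intro z hz
    rw [wG, if_neg (by simp [hc]), wB, if_pos han, Polynomial.eval_neg, Polynomial.eval_neg,
      Polynomial.eval_X, pstar_eval_onT hrdeg hz]
    have hpow : z ^ n = z ^ (n - 1) * z := by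
      conv_lhs => rw [show n = n - 1 + 1 from (Nat.succ_pred_eq_of_pos hn).symm]
      rw [pow_succ]
    rw [hpow]
    ring

end ORFpart

end ORFAux


namespace ORFAux
open ORF Polynomial

variable {α : ℕ → ℂ} {c : ℕ → Bool} {p : ℕ → Polynomial ℂ}

lemma caseEval {n : ℕ} (a : ℂ)
    (hKey : ∑ k ∈ Finset.range (n + 1),
        Polynomial.C (conj' ((p k * tailProd α c n k).eval a)) * (p k * tailProd α c n k)
      = Polynomial.C (conj' ((pstar n (p n)).eval a)) * pstar n (p n)) :
    ∀ z, conj' ((CnPoly α c p n z).eval a)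
      = (pstar n (p n)).eval z * conj' ((pstar n (p n)).eval a) := by
  intro z
  have hstep : (CnPoly α c p n z).eval a
      = ∑ k ∈ Finset.range (n + 1), conj' ((p k * tailProd α c n k).eval z)
          * (p k * tailProd α c n k).eval a := by
    rw [CnPoly, Polynomial.eval_finset_sum]
    refine Finset.sum_congr rfl fun k _ => ?_
    rw [Polynomial.eval_mul, Polynomial.eval_C, ← Polynomial.eval_mul]
  rw [hstep, conj', map_sum]
  calc ∑ k ∈ Finset.range (n + 1), (starRingEnd ℂ)
        (conj' ((p k * tailProd α c n k).eval z) * (p k * tailProd α c n k).eval a)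
      = ∑ k ∈ Finset.range (n + 1), Polynomial.eval z
          (Polynomial.C (conj' ((p k * tailProd α c n k).eval a))
            * (p k * tailProd α c n k)) := by
        refine Finset.sum_congr rfl fun k _ => ?_
        simp only [Polynomial.eval_mul, Polynomial.eval_C]
        simp only [conj', map_mul, Complex.conj_conj]
        ring
    _ = (pstar n (p n)).eval z * conj' ((pstar n (p n)).eval a) := by
        rw [← Polynomial.eval_finset_sum, hKey, Polynomial.eval_mul, Polynomial.eval_C]
        ring

lemma caseInfPoly {n : ℕ}
    (hKey : ∑ k ∈ Finset.range (n + 1),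
        Polynomial.C (conj' ((p k * tailProd α c n k).coeff n)) * (p k * tailProd α c n k)
      = Polynomial.C (conj' ((pstar n (p n)).coeff n)) * pstar n (p n)) :
    CnInf α c p n = Polynomial.C (conj' ((pstar n (p n)).coeff n)) * pstar n (p n) := by
  rw [CnInf, ← hKey]
  exact Finset.sum_congr rfl fun k _ => mul_comm _ _

end ORFAux

open ORF MeasureTheory ORFAux

/-- Corollary `rorCCD2`: if C_n(z,w) is the numerator of the kernel for
the sequence γ, i.e. k_n(z,w) = C_n(z,w)/(π_n(z)·conj(π_n(w))), then for all n ≥ 0,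
C_n(z,γ_n) = p_n^*(z)·conj(p_n^*(γ_n)) for all z, and C_n(γ_n,γ_n) = |p_n^*(γ_n)|²,
evaluation at γ_n = ∞ meaning the coefficient of z^n.  Here
C_n(z,w) = conj((CnPoly n z).eval w), C_n(z,∞) = (CnInf n).eval z and
C_n(∞,∞) = (CnInf n).coeff n. -/
theorem stmt9 (α : ℕ → ℂ) (hα0 : α 0 = 0) (hα : ∀ j, ‖α j‖ < 1)
    (c : ℕ → Bool) (μ : Measure ℂ) (hμ : CircleMeasure μ)
    (φ : ℕ → ℂ → ℂ) (p : ℕ → Polynomial ℂ)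
    (hφ : IsORF μ (piG α c) φ p) (hnφ : ∀ n, normG α c p n)
    (n : ℕ) :
    (c n = true →
      (∀ z, conj' ((CnPoly α c p n z).eval (α n)) =
          (pstar n (p n)).eval z * conj' ((pstar n (p n)).eval (α n))) ∧
      conj' ((CnPoly α c p n (α n)).eval (α n)) =
        (‖(pstar n (p n)).eval (α n)‖ : ℂ) ^ 2) ∧
    (c n = false → α n ≠ 0 →
      (∀ z, conj' ((CnPoly α c p n z).eval ((conj' (α n))⁻¹)) =
          (pstar n (p n)).eval z * conj' ((pstar n (p n)).eval ((conj' (α n))⁻¹))) ∧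
      conj' ((CnPoly α c p n ((conj' (α n))⁻¹)).eval ((conj' (α n))⁻¹)) =
        (‖(pstar n (p n)).eval ((conj' (α n))⁻¹)‖ : ℂ) ^ 2) ∧
    (c n = false → α n = 0 →
      (∀ z, (CnInf α c p n).eval z =
          (pstar n (p n)).eval z * conj' ((pstar n (p n)).coeff n)) ∧
      (CnInf α c p n).coeff n = (‖(pstar n (p n)).coeff n‖ : ℂ) ^ 2) := by
  have hPP := Jf_pstar_self (α := α) (c := c) hμ hα hφ (n := n)
  refine ⟨fun hc => ?_, fun hc han => ?_, fun hc han => ?_⟩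
  · have hKey := key_identity hμ hα hφ (fun q => q.eval (α n))
      (fun q r => by simp) (fun a q => by simp) (heP_true hnφ hc)
      (horth_true hμ hα hφ hc) hPP
    have h1 := caseEval (α n) hKey
    refine ⟨h1, ?_⟩
    rw [h1 (α n)]
    exact mul_conj'_abs _
  · have hKey := key_identity hμ hα hφ (fun q => q.eval ((conj' (α n))⁻¹))
      (fun q r => by simp) (fun a q => by simp) (heP_false_ne hnφ hc han)
      (horth_false_ne hμ hα hφ hc han) hPP
    have h1 := caseEval ((conj' (α n))⁻¹) hKey
    refine ⟨h1, ?_⟩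
    rw [h1 ((conj' (α n))⁻¹)]
    exact mul_conj'_abs _
  · have hKey := key_identity hμ hα hφ (fun q => q.coeff n)
      (fun q r => by simp) (fun a q => by simp) (heP_false_zero hnφ hc han)
      (horth_false_zero hμ hα hφ hc han) hPP
    have hC := caseInfPoly hKey
    constructor
    · intro z
      rw [hC, Polynomial.eval_mul, Polynomial.eval_C]
      ring
    · rw [hC, Polynomial.coeff_C_mul, mul_comm]
      exact mul_conj'_abs _
end
end
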